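/- arXiv:math/0409136 — 2 statements merged into one kernel-verified Lean document; each statement's English description precedes it below -/
import Mathlib

section
/- Let n ≥ 2, let U ⊆ ℝⁿ be an open set, let p ∈ U, let F be a finite-dimensional real normed vector space, and let ω : U → (ℝⁿ →L[ℝ] (F →L[ℝ] F)) be a continuous map (a continuous connection form in a local trivialization). Suppose σ : U → F is continuously differentiable on U \ {p} and parallel there, i.e. for every x ∈ U \ {p} and every v ∈ ℝⁿ its Fréchet derivative satisfies Dσ(x)(v) = −(ω(x)(v))(σ(x)). Then there exists a unique map σ̃ : U → F that is continuously differentiable on all of U, agrees with σ on U \ {p}, and satisfies Dσ̃(x)(v) = −(ω(x)(v))(σ̃(x)) for all x ∈ U and v ∈ ℝⁿ. -/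
open Metric Set Filter Function Module
open scoped Topology RealInnerProductSpace


/-- A section `σ` is *parallel* on a set `s` for the connection form `ω` if its Fréchet
derivative in every direction `v` equals `-(ω x v) (σ x)` at every point of `s`. -/
def IsParallelOn {n : ℕ} {F : Type*} [NormedAddCommGroup F] [NormedSpace ℝ F]
    (ω : EuclideanSpace ℝ (Fin n) →
      (EuclideanSpace ℝ (Fin n) →L[ℝ] (F →L[ℝ] F)))
    (σ : EuclideanSpace ℝ (Fin n) → F) (s : Set (EuclideanSpace ℝ (Fin n))) : Prop :=
  ∀ x ∈ s, ∀ v : EuclideanSpace ℝ (Fin n), fderiv ℝ σ x v = -((ω x) v) (σ x)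

lemma exists_orthogonal {n : ℕ} (hn : 2 ≤ n) (d : EuclideanSpace ℝ (Fin n)) :
    ∃ w : EuclideanSpace ℝ (Fin n), w ≠ 0 ∧ ⟪d, w⟫ = 0 := by
  have hfr : finrank ℝ (EuclideanSpace ℝ (Fin n)) = n := finrank_euclideanSpace_fin
  by_cases hd : d = 0
  · refine ⟨EuclideanSpace.single ⟨0, by omega⟩ (1:ℝ), ?_, by simp [hd]⟩
    intro h
    have := congrArg (fun z => ‖z‖) h
    simpa [EuclideanSpace.norm_single] using this
  · have hne : (ℝ ∙ d)ᗮ ≠ ⊥ := by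
      intro hbot
      have htop : (ℝ ∙ d) = ⊤ := Submodule.orthogonal_eq_bot_iff.mp hbot
      have h1 : finrank ℝ (ℝ ∙ d) = 1 := finrank_span_singleton hd
      rw [htop, finrank_top, hfr] at h1
      omega
    obtain ⟨w, hwmem, hw0⟩ := Submodule.exists_mem_ne_zero_of_ne_bot hne
    exact ⟨w, hw0, (Submodule.mem_orthogonal _ w).mp hwmem d
      (Submodule.mem_span_singleton_self d)⟩

lemma neBot_punct {n : ℕ} (hn : 2 ≤ n) (p : EuclideanSpace ℝ (Fin n))
    {s : Set (EuclideanSpace ℝ (Fin n))} (hs : s ∈ 𝓝 p) :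
    (𝓝[s \ {p}] p).NeBot := by
  haveI : Nontrivial (EuclideanSpace ℝ (Fin n)) := by
    refine ⟨EuclideanSpace.single ⟨0, by omega⟩ (1:ℝ), 0, ?_⟩
    intro h
    have := congrArg (fun z => ‖z‖) h
    simpa [EuclideanSpace.norm_single] using this
  haveI := Module.punctured_nhds_neBot ℝ (EuclideanSpace ℝ (Fin n)) p
  rw [diff_eq, nhdsWithin_inter_of_mem (mem_nhdsWithin_of_mem_nhds hs)]
  exact inferInstance

lemma lipschitz_aux {n : ℕ} (hn : 2 ≤ n) {F : Type*} [NormedAddCommGroup F]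
    [NormedSpace ℝ F] {f : EuclideanSpace ℝ (Fin n) → F} {p : EuclideanSpace ℝ (Fin n)}
    {r C : ℝ}
    (hdf : ∀ z ∈ ball p r \ {p}, DifferentiableAt ℝ f z)
    (hbd : ∀ z ∈ ball p r \ {p}, ‖fderiv ℝ f z‖ ≤ C) :
    ∀ x ∈ ball p r \ {p}, ∀ y ∈ ball p r \ {p}, ‖f x - f y‖ ≤ C * ‖x - y‖ := by
  have base : ∀ x ∈ ball p r \ {p}, ∀ y ∈ ball p r \ {p}, p ∉ segment ℝ y x →
      ‖f x - f y‖ ≤ C * ‖x - y‖ := by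
    intro x hx y hy hseg
    have hsub : segment ℝ y x ⊆ ball p r \ {p} := by
      intro z hz
      refine ⟨(convex_ball p r).segment_subset hy.1 hx.1 hz, ?_⟩
      intro h
      rw [mem_singleton_iff] at h
      exact hseg (h ▸ hz)
    exact Convex.norm_image_sub_le_of_norm_fderiv_le (fun z hz => hdf z (hsub hz))
      (fun z hz => hbd z (hsub hz)) (convex_segment y x) (left_mem_segment ℝ y x)
      (right_mem_segment ℝ y x)
  intro x hx y hy
  by_cases hseg : p ∈ segment ℝ y x
  · have hxy : x ≠ y := by
      rintro rfl
      rw [segment_same] at hseg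
      exact hx.2 (by simpa using hseg.symm)
    obtain ⟨w, hw0, hwinn⟩ := exists_orthogonal hn (x - y)
    have hyw : Tendsto (fun t : ℝ => y + t • w) (𝓝[>] 0) (𝓝 y) := by
      have hc : Continuous fun t : ℝ => y + t • w := by continuity
      have := hc.tendsto 0
      simp only [zero_smul, add_zero] at this
      exact this.mono_left nhdsWithin_le_nhds
    have hyb : ∀ᶠ t in 𝓝[>] (0:ℝ), y + t • w ∈ ball p r :=
      hyw (isOpen_ball.mem_nhds hy.1)
    have key : ∀ᶠ t in 𝓝[>] (0:ℝ), ‖f x - f (y + t • w)‖ ≤ C * ‖x - (y + t • w)‖ := by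
      filter_upwards [hyb, self_mem_nhdsWithin] with t htb ht
      rw [mem_Ioi] at ht
      have hne : y + t • w ≠ p := by
        intro h
        obtain ⟨a, b, ha, hb, hab, habp⟩ := hseg
        have hb1 : a = 1 - b := by linarith
        subst hb1
        have h2 : t • w = b • (x - y) := by
          have h3 : (y + t • w) - y = ((1-b) • y + b • x) - y := by rw [h, habp]
          linear_combination (norm := module) h3
        have h4 : ⟪x - y, t • w⟫ = ⟪x - y, b • (x - y)⟫ := by rw [h2]
        rw [real_inner_smul_right, real_inner_smul_right, hwinn,
          real_inner_self_eq_norm_sq] at h4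
        have hxy0 : x - y ≠ 0 := sub_ne_zero.mpr hxy
        have : ‖x - y‖ ≠ 0 := norm_ne_zero_iff.mpr hxy0
        have hb0 : b = 0 := by
          rcases mul_eq_zero.mp (by linarith [h4] : b * ‖x - y‖ ^ 2 = 0) with h | h
          · exact h
          · exact absurd h (by positivity)
        rw [hb0] at habp
        simp at habp
        exact hy.2 (by simp [habp])
      have hsegt : p ∉ segment ℝ (y + t • w) x := by
        intro hmem
        obtain ⟨a, b, ha, hb, hab, habp⟩ := hmem
        obtain ⟨c, d, hc, hd, hcd, hcdp⟩ := hseg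
        have hb1 : b = 1 - a := by linarith
        have hd1 : d = 1 - c := by linarith
        subst hb1; subst hd1
        have h5 : a • (y + t • w) + (1-a) • x = c • y + (1-c) • x := by
          rw [habp, hcdp]
        have h6 : (a * t) • w = (a - c) • (x - y) := by
          linear_combination (norm := module) h5
        have h7 : ⟪(a*t) • w, w⟫ = ⟪(a - c) • (x - y), w⟫ := by rw [h6]
        rw [real_inner_smul_left, real_inner_smul_left, hwinn,
          real_inner_self_eq_norm_sq] at h7
        have hnw : ‖w‖ ≠ 0 := norm_ne_zero_iff.mpr hw0
        have ha0 : a = 0 := by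
          have hat : a * t * ‖w‖ ^ 2 = 0 := by linarith
          rcases mul_eq_zero.mp hat with h | h
          · rcases mul_eq_zero.mp h with h' | h'
            · exact h'
            · exact absurd h' (by positivity)
          · exact absurd h (by positivity)
        rw [ha0] at habp
        simp at habp
        exact hx.2 (by simp [habp])
      exact base x hx (y + t • w) ⟨htb, hne⟩ hsegt
    have h1 : Tendsto (fun t : ℝ => ‖f x - f (y + t • w)‖) (𝓝[>] 0) (𝓝 ‖f x - f y‖) :=
      (((hdf y hy).continuousAt.tendsto.comp hyw).const_sub (f x)).norm
    have h2 : Tendsto (fun t : ℝ => C * ‖x - (y + t • w)‖) (𝓝[>] 0) (𝓝 (C * ‖x - y‖)) :=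
      ((hyw.const_sub x).norm.const_mul C)
    exact le_of_tendsto_of_tendsto h1 h2 key
  · exact base x hx y hy hseg

set_option maxHeartbeats 1000000 in
/-- **Lemma 5**: a section which is `C¹` and parallel on `U \ {p}` for a continuous
connection form extends uniquely to a `C¹` parallel section on all of `U`. -/
theorem parallel_section_extension
    (n : ℕ) (hn : 2 ≤ n)
    (U : Set (EuclideanSpace ℝ (Fin n))) (hU : IsOpen U)
    (p : EuclideanSpace ℝ (Fin n)) (hp : p ∈ U)
    (F : Type*) [NormedAddCommGroup F] [NormedSpace ℝ F] [FiniteDimensional ℝ F]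
    (ω : EuclideanSpace ℝ (Fin n) →
      (EuclideanSpace ℝ (Fin n) →L[ℝ] (F →L[ℝ] F)))
    (hω : ContinuousOn ω U)
    (σ : EuclideanSpace ℝ (Fin n) → F)
    (hσ : ContDiffOn ℝ 1 σ (U \ {p}))
    (hσpar : IsParallelOn ω σ (U \ {p})) :
    ∃ σt : EuclideanSpace ℝ (Fin n) → F,
      (ContDiffOn ℝ 1 σt U ∧ Set.EqOn σt σ (U \ {p}) ∧ IsParallelOn ω σt U) ∧
      ∀ σt' : EuclideanSpace ℝ (Fin n) → F,
        (ContDiffOn ℝ 1 σt' U ∧ Set.EqOn σt' σ (U \ {p}) ∧ IsParallelOn ω σt' U) →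
        Set.EqOn σt' σt U := by
  classical
  have hUp : IsOpen (U \ {p}) := hU.sdiff isClosed_singleton
  have hdiffσ : ∀ z ∈ U \ {p}, DifferentiableAt ℝ σ z := fun z hz =>
    (hσ.differentiableOn one_ne_zero).differentiableAt (hUp.mem_nhds hz)
  have hfderσ : ∀ z ∈ U \ {p}, fderiv ℝ σ z = -((ω z).flip (σ z)) := by
    intro z hz
    ext v
    simp [ContinuousLinearMap.neg_apply, ContinuousLinearMap.flip_apply, hσpar z hz v]
  have hopσ : ∀ z ∈ U \ {p}, ‖fderiv ℝ σ z‖ ≤ ‖ω z‖ * ‖σ z‖ := by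
    intro z hz
    rw [hfderσ z hz, norm_neg]
    calc ‖(ω z).flip (σ z)‖ ≤ ‖(ω z).flip‖ * ‖σ z‖ := ContinuousLinearMap.le_opNorm _ _
      _ = ‖ω z‖ * ‖σ z‖ := by rw [ContinuousLinearMap.opNorm_flip]
  -- choose a radius
  obtain ⟨r0, hr0, hball⟩ := Metric.isOpen_iff.mp hU p hp
  set r := r0 / 2 with hrdef
  have hr : 0 < r := by positivity
  have hrr0 : r < r0 := by rw [hrdef]; linarith
  have hrU : closedBall p r ⊆ U := fun z hz =>
    hball (lt_of_le_of_lt (mem_closedBall.mp hz) hrr0)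
  have hcbU : closedBall p r \ {p} ⊆ U \ {p} := fun z hz => ⟨hrU hz.1, hz.2⟩
  -- bound on ω
  obtain ⟨M0, hM0⟩ := (isCompact_closedBall p r).exists_bound_of_continuousOn (f := ω) (hω.mono hrU)
  set M := max M0 0 with hMdef
  have hM : 0 ≤ M := le_max_right _ _
  have hMb : ∀ z ∈ closedBall p r, ‖ω z‖ ≤ M := fun z hz => (hM0 z hz).trans (le_max_left _ _)
  -- bound on σ on the sphere
  have hsphU : sphere p r ⊆ U \ {p} := by
    intro z hz
    refine ⟨hrU (sphere_subset_closedBall hz), ?_⟩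
    intro h
    rw [mem_singleton_iff] at h
    rw [mem_sphere, h, dist_self] at hz
    exact absurd hz.symm (ne_of_gt hr)
  obtain ⟨K0, hK0⟩ := (isCompact_sphere p r).exists_bound_of_continuousOn (f := σ)
      (hσ.continuousOn.mono hsphU)
  set K := max K0 0 with hKdef
  have hK : 0 ≤ K := le_max_right _ _
  have hKb : ∀ z ∈ sphere p r, ‖σ z‖ ≤ K := fun z hz => (hK0 z hz).trans (le_max_left _ _)
  set B := K * Real.exp (M * r) with hBdef
  have hBnn : 0 ≤ B := by positivity
  -- Gronwall: σ is bounded by B on the punctured closed ball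
  have hB : ∀ x ∈ closedBall p r \ {p}, ‖σ x‖ ≤ B := by
    rintro x ⟨hx1, hx2⟩
    have hxne : x ≠ p := fun h => hx2 (by simp [h])
    have hxp : x - p ≠ 0 := sub_ne_zero.mpr hxne
    set t0 := ‖x - p‖ with ht0def
    have ht0 : 0 < t0 := norm_pos_iff.mpr hxp
    have ht0r : t0 ≤ r := by rw [ht0def, ← dist_eq_norm]; exact mem_closedBall.mp hx1
    set γ : ℝ → EuclideanSpace ℝ (Fin n) := fun s => p + ((r - s) / t0) • (x - p) with hγ
    have hγnorm : ∀ s ∈ Icc (0:ℝ) (r - t0), ‖γ s - p‖ = r - s := by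
      intro s hs
      have h0 : (0:ℝ) ≤ r - s := by have := hs.2; linarith
      rw [hγ]
      simp only [add_sub_cancel_left, norm_smul, Real.norm_eq_abs, ← ht0def]
      rw [abs_of_nonneg (div_nonneg h0 ht0.le), div_mul_cancel₀ _ (ne_of_gt ht0)]
    have hγmem : ∀ s ∈ Icc (0:ℝ) (r - t0), γ s ∈ closedBall p r \ {p} := by
      intro s hs
      constructor
      · rw [mem_closedBall, dist_eq_norm, hγnorm s hs]
        have := hs.1; linarith
      · intro h
        rw [mem_singleton_iff] at h
        have h2 : ‖γ s - p‖ = 0 := by rw [h, sub_self, norm_zero]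
        rw [hγnorm s hs] at h2
        have := hs.2; linarith
    have hasD : ∀ s ∈ Icc (0:ℝ) (r - t0), HasDerivAt (fun u => σ (γ u))
        (fderiv ℝ σ (γ s) ((-1 / t0) • (x - p))) s := by
      intro s hs
      have h1 : HasDerivAt (fun u : ℝ => (r - u) / t0) (-1 / t0) s := by
        simpa using ((hasDerivAt_id s).const_sub r).div_const t0
      have h3 : HasDerivAt γ ((-1 / t0) • (x - p)) s := by
        rw [hγ]
        exact (h1.smul_const (x - p)).const_add p
      exact ((hdiffσ (γ s) (hcbU (hγmem s hs))).hasFDerivAt).comp_hasDerivAt s h3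
    have hcontγ : ContinuousOn (fun u => σ (γ u)) (Icc 0 (r - t0)) :=
      fun s hs => (hasD s hs).continuousAt.continuousWithinAt
    have hvn : ‖((-1 : ℝ) / t0) • (x - p)‖ = 1 := by
      rw [norm_smul, Real.norm_eq_abs, abs_div, abs_neg, abs_one, ← ht0def,
        abs_of_pos ht0, div_mul_cancel₀ _ (ne_of_gt ht0)]
    have hbound : ∀ s ∈ Ico (0:ℝ) (r - t0),
        ‖fderiv ℝ σ (γ s) ((-1 / t0) • (x - p))‖ ≤ M * ‖σ (γ s)‖ + 0 := by
      intro s hs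
      have hsIcc : s ∈ Icc (0:ℝ) (r - t0) := ⟨hs.1, hs.2.le⟩
      have hmem := hγmem s hsIcc
      calc ‖fderiv ℝ σ (γ s) ((-1 / t0) • (x - p))‖
          ≤ ‖fderiv ℝ σ (γ s)‖ * ‖((-1 : ℝ) / t0) • (x - p)‖ :=
            ContinuousLinearMap.le_opNorm _ _
        _ = ‖fderiv ℝ σ (γ s)‖ := by rw [hvn, mul_one]
        _ ≤ ‖ω (γ s)‖ * ‖σ (γ s)‖ := hopσ _ (hcbU hmem)
        _ ≤ M * ‖σ (γ s)‖ := by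
            exact mul_le_mul_of_nonneg_right (hMb _ hmem.1) (norm_nonneg _)
        _ = M * ‖σ (γ s)‖ + 0 := by ring
    have hstart : ‖σ (γ 0)‖ ≤ K := by
      refine hKb _ ?_
      rw [mem_sphere, dist_eq_norm, hγnorm 0 ⟨le_rfl, by linarith⟩, sub_zero]
    have hgron := norm_le_gronwallBound_of_norm_deriv_right_le hcontγ
      (fun s hs => (hasD s ⟨hs.1, hs.2.le⟩).hasDerivWithinAt) hstart hbound
      (r - t0) (right_mem_Icc.mpr (by linarith))
    rw [gronwallBound_ε0, sub_zero] at hgron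
    have hγend : γ (r - t0) = x := by
      rw [hγ]
      simp only [sub_sub_cancel]
      rw [div_self (ne_of_gt ht0), one_smul, add_sub_cancel]
    rw [hγend] at hgron
    refine hgron.trans ?_
    rw [hBdef]
    refine mul_le_mul_of_nonneg_left ?_ hK
    exact Real.exp_le_exp.mpr (mul_le_mul_of_nonneg_left (by linarith) hM)
  -- global Lipschitz bound on the punctured ball
  set C1 := M * B with hC1def
  have hC1 : 0 ≤ C1 := mul_nonneg hM hBnn
  have hbd1 : ∀ z ∈ ball p r \ {p}, ‖fderiv ℝ σ z‖ ≤ C1 := by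
    intro z hz
    have hz' : z ∈ closedBall p r \ {p} := ⟨ball_subset_closedBall hz.1, hz.2⟩
    refine (hopσ z (hcbU hz')).trans ?_
    exact mul_le_mul (hMb z hz'.1) (hB z hz') (norm_nonneg _) hM
  have hlip := lipschitz_aux hn
    (fun z hz => hdiffσ z (hcbU ⟨ball_subset_closedBall hz.1, hz.2⟩)) hbd1
  -- construct the limit L at p
  have h0n : 0 < n := by omega
  set e : EuclideanSpace ℝ (Fin n) := EuclideanSpace.single (⟨0, h0n⟩ : Fin n) (1:ℝ)
    with hedef
  have he : ‖e‖ = 1 := by rw [hedef, EuclideanSpace.norm_single]; norm_num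
  set z : ℕ → EuclideanSpace ℝ (Fin n) := fun k => p + (r / (k + 2)) • e with hzdef
  have hzp : ∀ k, ‖z k - p‖ = r / (k + 2) := by
    intro k
    rw [hzdef]
    simp only [add_sub_cancel_left, norm_smul, Real.norm_eq_abs, he, mul_one]
    rw [abs_of_pos (by positivity)]
  have hzmem : ∀ k, z k ∈ ball p r \ {p} := by
    intro k
    constructor
    · rw [mem_ball, dist_eq_norm, hzp k, div_lt_iff₀ (by positivity)]
      nlinarith [hr]
    · intro h
      rw [mem_singleton_iff] at h
      have h2 := hzp k
      rw [h, sub_self, norm_zero] at h2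
      have : (0:ℝ) < r / (k + 2) := by positivity
      linarith [h2 ▸ this]
  have hseq0 : Tendsto (fun k : ℕ => r / ((k : ℝ) + 2)) atTop (𝓝 0) := by
    apply Tendsto.div_atTop tendsto_const_nhds
    exact tendsto_atTop_add_const_right atTop 2 tendsto_natCast_atTop_atTop
  have hcs : CauchySeq (fun k => σ (z k)) := by
    refine cauchySeq_of_le_tendsto_0 (fun N => C1 * (r / (N + 2) + r / (N + 2))) ?_ ?_
    · intro j k N hj hk
      have h1 : dist (σ (z j)) (σ (z k)) ≤ C1 * ‖z j - z k‖ := by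
        rw [dist_eq_norm]
        exact hlip _ (hzmem j) _ (hzmem k)
      have h2 : ‖z j - z k‖ ≤ r / (N + 2) + r / (N + 2) := by
        calc ‖z j - z k‖ ≤ ‖z j - p‖ + ‖z k - p‖ := by
              have := norm_sub_le (z j - p) (z k - p)
              simpa using this
          _ ≤ r / (N + 2) + r / (N + 2) := by
              rw [hzp j, hzp k]
              have hcj : (N:ℝ) + 2 ≤ (j:ℝ) + 2 := by
                have : (N:ℝ) ≤ j := Nat.cast_le.mpr hj
                linarith
              have hck : (N:ℝ) + 2 ≤ (k:ℝ) + 2 := by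
                have : (N:ℝ) ≤ k := Nat.cast_le.mpr hk
                linarith
              gcongr
      exact h1.trans (mul_le_mul_of_nonneg_left h2 hC1)
    · have := (hseq0.add hseq0).const_mul C1
      simpa using this
  obtain ⟨L, hL⟩ := cauchySeq_tendsto_of_complete hcs
  have hztend : Tendsto (fun k => dist (z k) p) atTop (𝓝 0) := by
    simp only [dist_eq_norm]
    simpa only [hzp] using hseq0
  have hTend : Tendsto σ (𝓝[ball p r \ {p}] p) (𝓝 L) := by
    rw [Metric.tendsto_nhdsWithin_nhds]
    intro ε hε
    have hev1 : ∀ᶠ k in atTop, dist (σ (z k)) L < ε / 2 :=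
      hL (ball_mem_nhds L (by positivity))
    have hev2 : ∀ᶠ k in atTop, C1 * dist (z k) p < ε / 4 := by
      have h4 : (0:ℝ) < ε / 4 := by positivity
      have := (hztend.const_mul C1)
      rw [mul_zero] at this
      exact this.eventually (eventually_lt_nhds h4)
    obtain ⟨k, hk1, hk2⟩ := (hev1.and hev2).exists
    refine ⟨ε / (4 * (C1 + 1)), by positivity, ?_⟩
    intro x hx hxd
    have e1 : dist (σ x) (σ (z k)) ≤ C1 * (dist x p + dist (z k) p) := by
      rw [dist_eq_norm]
      refine (hlip x hx (z k) (hzmem k)).trans ?_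
      refine mul_le_mul_of_nonneg_left ?_ hC1
      calc ‖x - z k‖ ≤ ‖x - p‖ + ‖z k - p‖ := by
            have := norm_sub_le (x - p) (z k - p); simpa using this
        _ = dist x p + dist (z k) p := by rw [dist_eq_norm, dist_eq_norm]
    have e2 : C1 * dist x p ≤ ε / 4 := by
      have h1 : C1 * dist x p ≤ (C1 + 1) * (ε / (4 * (C1 + 1))) := by
        have := mul_le_mul (by linarith : C1 ≤ C1 + 1) hxd.le dist_nonneg
          (by linarith : (0:ℝ) ≤ C1 + 1)
        exact this
      have h2 : (C1 + 1) * (ε / (4 * (C1 + 1))) = ε / 4 := by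
        field_simp
      linarith [h1, h2 ▸ h1]
    calc dist (σ x) L ≤ dist (σ x) (σ (z k)) + dist (σ (z k)) L := dist_triangle _ _ _
      _ ≤ C1 * (dist x p + dist (z k) p) + dist (σ (z k)) L := by linarith [e1]
      _ = C1 * dist x p + C1 * dist (z k) p + dist (σ (z k)) L := by ring
      _ < ε := by linarith [e2, hk2, hk1]
  have hTend' : Tendsto σ (𝓝[≠] p) (𝓝 L) := by
    have heq : ball p r \ {p} = ball p r ∩ {p}ᶜ := diff_eq _ _
    rw [heq, nhdsWithin_inter_of_mem
      (mem_nhdsWithin_of_mem_nhds (ball_mem_nhds p hr))] at hTend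
    exact hTend
  -- the extension
  set σt := Function.update σ p L with hσtdef
  have hEq : ∀ z, z ≠ p → σt z = σ z := fun z hz => Function.update_of_ne hz L σ
  have hEqOn : Set.EqOn σt σ (U \ {p}) := fun z hz => hEq z (fun h => hz.2 (by simp [h]))
  have hσtp : σt p = L := Function.update_self p L σ
  have hcontp : ContinuousAt σt p := by
    rw [hσtdef, continuousAt_update_same]
    exact hTend'
  have hσtd : ∀ z ∈ U \ {p}, DifferentiableAt ℝ σt z ∧ fderiv ℝ σt z = fderiv ℝ σ z := by
    intro z hz
    have hzne : z ≠ p := fun h => hz.2 (by simp [h])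
    have hev : σt =ᶠ[𝓝 z] σ := by
      filter_upwards [isOpen_compl_singleton.mem_nhds hzne] with w hw
      exact hEq w hw
    exact ⟨(hdiffσ z hz).congr_of_eventuallyEq hev, hev.fderiv_eq⟩
  have hσtca : ∀ x ∈ U, ContinuousAt σt x := by
    intro x hx
    by_cases hxp : x = p
    · rw [hxp]; exact hcontp
    · exact ((hσtd x ⟨hx, by simp [hxp]⟩).1).continuousAt
  have hσtcont : ContinuousOn σt U := fun x hx => (hσtca x hx).continuousWithinAt
  set G : EuclideanSpace ℝ (Fin n) → (EuclideanSpace ℝ (Fin n) →L[ℝ] F) :=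
    fun x => -((ω x).flip (σt x)) with hGdef
  have hGcont : ContinuousOn G U := by
    have h1 : ContinuousOn (fun x => (ω x).flip) U :=
      (ContinuousLinearMap.flipₗᵢ ℝ (EuclideanSpace ℝ (Fin n)) F F).continuous.comp_continuousOn
        hω
    exact (h1.clm_apply hσtcont).neg
  have hGσ : ∀ x ∈ U \ {p}, fderiv ℝ σt x = G x := by
    intro x hx
    rw [(hσtd x hx).2, hfderσ x hx, hGdef]
    simp only
    rw [hEqOn hx]
  have hfd : ∀ x ∈ U, HasFDerivAt σt (G x) x := by
    intro x hx
    by_cases hxp : x = p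
    · subst hxp
      rw [hasFDerivAt_iff_isLittleO, Asymptotics.isLittleO_iff]
      intro c hc
      have hGc : ContinuousAt G x := hGcont.continuousAt (hU.mem_nhds hx)
      have hev1 : ∀ᶠ w in 𝓝 x, ‖G w - G x‖ < c ∧ w ∈ U := by
        have h1 : ∀ᶠ w in 𝓝 x, G w ∈ ball (G x) c := hGc (ball_mem_nhds (G x) hc)
        filter_upwards [h1, hU.mem_nhds hx] with w hw hwU
        rw [mem_ball, dist_eq_norm] at hw
        exact ⟨hw, hwU⟩
      obtain ⟨δ, hδpos, hδsub⟩ := Metric.mem_nhds_iff.mp hev1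
      set D := G x with hD
      have hdg : ∀ w ∈ ball x δ \ {x}, DifferentiableAt ℝ (fun u => σt u - D u) w := by
        intro w hw
        have hwU : w ∈ U \ {x} := ⟨(hδsub hw.1).2, hw.2⟩
        exact ((hσtd w hwU).1).sub (D.differentiableAt)
      have hbg : ∀ w ∈ ball x δ \ {x}, ‖fderiv ℝ (fun u => σt u - D u) w‖ ≤ c := by
        intro w hw
        have hwU : w ∈ U \ {x} := ⟨(hδsub hw.1).2, hw.2⟩
        have h1 : fderiv ℝ (fun u => σt u - D u) w = fderiv ℝ σt w - D := by
          rw [fderiv_fun_sub ((hσtd w hwU).1) D.differentiableAt, D.fderiv]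
        rw [h1, hGσ w hwU]
        exact le_of_lt (hδsub hw.1).1
      have hlip2 := lipschitz_aux hn hdg hbg
      have hgc : ContinuousAt (fun u => σt u - D u) x :=
        hcontp.sub D.continuous.continuousAt
      haveI := neBot_punct hn x (ball_mem_nhds x hδpos)
      have hgp : ∀ w ∈ ball x δ, ‖(σt w - D w) - (σt x - D x)‖ ≤ c * ‖w - x‖ := by
        intro w hw
        by_cases hwx : w = x
        · simp [hwx]
        · have t1 : Tendsto (fun y => ‖(σt w - D w) - (σt y - D y)‖)
              (𝓝[ball x δ \ {x}] x) (𝓝 ‖(σt w - D w) - (σt x - D x)‖) :=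
            (((hgc.tendsto.mono_left nhdsWithin_le_nhds).const_sub _).norm)
          have t2 : Tendsto (fun y => c * ‖w - y‖) (𝓝[ball x δ \ {x}] x)
              (𝓝 (c * ‖w - x‖)) := by
            have : Tendsto (fun y : EuclideanSpace ℝ (Fin n) => y)
                (𝓝[ball x δ \ {x}] x) (𝓝 x) := tendsto_id.mono_left nhdsWithin_le_nhds
            exact ((this.const_sub w).norm.const_mul c)
          refine le_of_tendsto_of_tendsto t1 t2 ?_
          filter_upwards [self_mem_nhdsWithin] with y hy
          exact hlip2 w ⟨hw, by simp [hwx]⟩ y hy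
      filter_upwards [ball_mem_nhds x hδpos] with w hw
      have h2 := hgp w hw
      have heq2 : (σt w - D w) - (σt x - D x) = σt w - σt x - D (w - x) := by
        rw [map_sub]; abel
      rw [heq2] at h2
      exact h2
    · have hxU : x ∈ U \ {p} := ⟨hx, by simp [hxp]⟩
      have h1 := (hσtd x hxU).1.hasFDerivAt
      rwa [hGσ x hxU] at h1
  have hfderivt : ∀ x ∈ U, fderiv ℝ σt x = G x := fun x hx => (hfd x hx).fderiv
  have hpar : IsParallelOn ω σt U := by
    intro x hx v
    rw [hfderivt x hx, hGdef]
    simp [ContinuousLinearMap.neg_apply, ContinuousLinearMap.flip_apply]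
  have hdiffOn : DifferentiableOn ℝ σt U := fun x hx =>
    ((hfd x hx).differentiableAt).differentiableWithinAt
  have hcd : ContDiffOn ℝ 1 σt U := by
    have h01 : (1 : WithTop ℕ∞) = 0 + 1 := by norm_num
    rw [h01, contDiffOn_succ_iff_fderiv_of_isOpen hU]
    refine ⟨hdiffOn, ?_, ?_⟩
    · intro h; exact absurd h (by simp)
    · rw [contDiffOn_zero]
      exact hGcont.congr hfderivt
  refine ⟨σt, ⟨hcd, hEqOn, hpar⟩, ?_⟩
  rintro σt' ⟨hcd', hEqOn', hpar'⟩ x hx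
  by_cases hxp : x = p
  · subst hxp
    haveI hl : (𝓝[U \ {x}] x).NeBot := neBot_punct hn x (hU.mem_nhds hx)
    have t1 : Tendsto σt' (𝓝[U \ {x}] x) (𝓝 (σt' x)) :=
      ((hcd'.continuousOn.continuousWithinAt hx).mono diff_subset)
    have t2 : Tendsto σt (𝓝[U \ {x}] x) (𝓝 (σt x)) :=
      ((hcd.continuousOn.continuousWithinAt hx).mono diff_subset)
    have hev : σt' =ᶠ[𝓝[U \ {x}] x] σt := by
      filter_upwards [self_mem_nhdsWithin] with w hw
      rw [hEqOn' hw, hEqOn hw]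
    exact tendsto_nhds_unique t1 (t2.congr' hev.symm)
  · have hxU : x ∈ U \ {p} := ⟨hx, by simp [hxp]⟩
    rw [hEqOn' hxU, ← hEqOn hxU]
end

section
/- Let n ≥ 1, R > 0, C ≥ 0, and let τ, μ be natural numbers with μ ≥ τ − 1 ≥ 2. Let h be a C^μ map from the open set {y ∈ ℝⁿ : ‖y‖ > R} to n×n real matrices whose iterated derivatives satisfy ‖D^k h(y)‖ ≤ C‖y‖^{−τ−k} for all 0 ≤ k ≤ μ and all ‖y‖ > R. Let B(z) denote the n×n matrix ‖z‖^{−2}(I − 2‖z‖^{−2}·z zᵀ), which is the matrix of the differential at z of the inversion map ι(z) = z/‖z‖², and for 0 < ‖z‖ < 1/R define ḡ(z) := ‖z‖⁴ · B(z)ᵀ (I + h(z/‖z‖²)) B(z). Then there exists a map G from the open ball {z : ‖z‖ < 1/R} to n×n real matrices that is (τ−1)-times continuously differentiable on that ball, agrees with ḡ on the punctured ball 0 < ‖z‖ < 1/R, and satisfies G(0) = I. -/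
open Matrix

attribute [local instance] Matrix.normedAddCommGroup Matrix.normedSpace

/-- The Euclidean norm of a vector in `ℝⁿ`. -/
noncomputable def euclNorm {n : ℕ} (y : Fin n → ℝ) : ℝ :=
  Real.sqrt (∑ i, y i ^ 2)

/-- The matrix `B(z) = ‖z‖⁻²(I − 2‖z‖⁻² z zᵀ)` of the differential at `z` of the inversion
map `ι(z) = z/‖z‖²`; here `∑ i, z i ^ 2 = ‖z‖²`. -/
noncomputable def inversionDiff {n : ℕ} (z : Fin n → ℝ) : Matrix (Fin n) (Fin n) ℝ :=
  (∑ i, z i ^ 2)⁻¹ • ((1 : Matrix (Fin n) (Fin n) ℝ)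
    - (2 * (∑ i, z i ^ 2)⁻¹) • Matrix.vecMulVec z z)

/-- The coefficient matrix `ḡ(z) = ‖z‖⁴ · B(z)ᵀ (I + h(z/‖z‖²)) B(z)` of the conformally
rescaled metric `ρ⁻⁴ g` in the inverted coordinates `z = y/‖y‖²`. -/
noncomputable def invertedMetric {n : ℕ}
    (h : (Fin n → ℝ) → Matrix (Fin n) (Fin n) ℝ) (z : Fin n → ℝ) :
    Matrix (Fin n) (Fin n) ℝ :=
  ((∑ i, z i ^ 2) ^ 2) •
    ((inversionDiff z)ᵀ * (1 + h ((∑ i, z i ^ 2)⁻¹ • z)) * inversionDiff z)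

open Filter Set Metric

open Filter Set Metric

section General

variable {E : Type*} [NormedAddCommGroup E] [NormedSpace ℝ E]
variable {F : Type*} [NormedAddCommGroup F] [NormedSpace ℝ F]

/-- Scaling by a nonzero real as a continuous linear equivalence. -/
noncomputable def smulCLE (c : ℝ) (hc : c ≠ 0) : E ≃L[ℝ] E :=
  { toFun := fun x => c • x
    invFun := fun x => c⁻¹ • x
    map_add' := fun x y => smul_add c x y
    map_smul' := fun r x => smul_comm c r x
    left_inv := fun x => inv_smul_smul₀ hc x
    right_inv := fun x => smul_inv_smul₀ hc x
    continuous_toFun := continuous_const_smul c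
    continuous_invFun := continuous_const_smul c⁻¹ }

@[simp] lemma smulCLE_apply {c : ℝ} (hc : c ≠ 0) (x : E) : smulCLE c hc x = c • x := rfl

@[simp] lemma smulCLE_symm_apply {c : ℝ} (hc : c ≠ 0) (x : E) :
    (smulCLE c hc).symm x = c⁻¹ • x := rfl

lemma smulCLE_norm_le {c : ℝ} (hc : c ≠ 0) :
    ‖((smulCLE c hc : E ≃L[ℝ] E) : E →L[ℝ] E)‖ ≤ |c| := by
  refine ContinuousLinearMap.opNorm_le_bound _ (abs_nonneg c) fun x => ?_
  show ‖c • x‖ ≤ |c| * ‖x‖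
  rw [norm_smul, Real.norm_eq_abs]

lemma norm_compCLM_le {k : ℕ} (A : ContinuousMultilinearMap ℝ (fun _ : Fin k => E) F)
    (g : E →L[ℝ] E) {b : ℝ} (hg : ‖g‖ ≤ b) :
    ‖A.compContinuousLinearMap (fun _ => g)‖ ≤ ‖A‖ * b ^ k := by
  refine (A.norm_compContinuousLinearMap_le _).trans ?_
  have hb : 0 ≤ b := (norm_nonneg g).trans hg
  have : ∏ _i : Fin k, ‖g‖ ≤ b ^ k := by
    rw [Finset.prod_const, Finset.card_fin]
    exact pow_le_pow_left₀ (norm_nonneg g) hg k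
  exact mul_le_mul_of_nonneg_left this (norm_nonneg A)

/-- Scaling inequality for iterated derivatives, for functions on `E \ {0}`. -/
theorem norm_iteratedFDeriv_scale {f : E → F} (k : ℕ) {c : ℝ} (hc : 0 < c) {z : E} (hz : z ≠ 0) :
    ‖iteratedFDeriv ℝ k f z‖ ≤ ‖iteratedFDeriv ℝ k (fun x => f (c • x)) (c⁻¹ • z)‖ * c⁻¹ ^ k := by
  have hc' : c ≠ 0 := hc.ne'
  set s : Set E := {x | x ≠ 0} with hs
  have hso : IsOpen s := isOpen_compl_singleton
  have hxz : c⁻¹ • z ∈ s := smul_ne_zero (inv_ne_zero hc') hz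
  have hmem : (smulCLE c hc' : E ≃L[ℝ] E) (c⁻¹ • z) ∈ s := by
    rw [smulCLE_apply, smul_inv_smul₀ hc']; exact hz
  have key := ContinuousLinearEquiv.iteratedFDerivWithin_comp_right (𝕜 := ℝ)
    (smulCLE c hc') f hso.uniqueDiffOn hmem k
  have hpre : ⇑(smulCLE c hc' : E ≃L[ℝ] E) ⁻¹' s = s := by
    ext x
    simp only [mem_preimage, hs, mem_setOf_eq, smulCLE_apply, smul_ne_zero_iff]
    exact ⟨fun h => h.2, fun h => ⟨hc', h⟩⟩
  rw [hpre] at key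
  rw [show (smulCLE c hc' : E ≃L[ℝ] E) (c⁻¹ • z) = z by
    rw [smulCLE_apply, smul_inv_smul₀ hc']] at key
  have e1 : iteratedFDerivWithin ℝ k f s z = iteratedFDeriv ℝ k f z :=
    iteratedFDerivWithin_of_isOpen k hso hz
  have e2 : iteratedFDerivWithin ℝ k (f ∘ (smulCLE c hc' : E ≃L[ℝ] E)) s (c⁻¹ • z)
      = iteratedFDeriv ℝ k (fun x => f (c • x)) (c⁻¹ • z) := by
    rw [iteratedFDerivWithin_of_isOpen k hso hxz]; rfl
  set A := iteratedFDerivWithin ℝ k f s z with hA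
  have hAe : A = (A.compContinuousLinearMap fun _ =>
        ((smulCLE c hc' : E ≃L[ℝ] E) : E →L[ℝ] E)).compContinuousLinearMap
      (fun _ => (((smulCLE c hc').symm : E ≃L[ℝ] E) : E →L[ℝ] E)) := by
    ext m
    simp only [ContinuousMultilinearMap.compContinuousLinearMap_apply,
      ContinuousLinearEquiv.coe_coe, smulCLE_apply, smulCLE_symm_apply, smul_inv_smul₀ hc']
  calc ‖iteratedFDeriv ℝ k f z‖ = ‖A‖ := by rw [e1]
    _ ≤ ‖A.compContinuousLinearMap fun _ =>
          ((smulCLE c hc' : E ≃L[ℝ] E) : E →L[ℝ] E)‖ * c⁻¹ ^ k := by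
        nth_rewrite 1 [hAe]
        refine norm_compCLM_le _ _ ?_
        refine (smulCLE_norm_le (inv_ne_zero hc')).trans ?_
        rw [abs_of_pos (inv_pos.mpr hc)]
    _ = ‖iteratedFDeriv ℝ k (fun x => f (c • x)) (c⁻¹ • z)‖ * c⁻¹ ^ k := by
        rw [← key, e2]

theorem exists_sphere_bound [FiniteDimensional ℝ E] {f : E → F} {m : WithTop ℕ∞} (k : ℕ)
    (hf : ContDiffOn ℝ m f {x : E | x ≠ 0}) (hk : (k : WithTop ℕ∞) ≤ m) :
    ∃ D, 0 ≤ D ∧ ∀ z : E, ‖z‖ = 1 → ‖iteratedFDeriv ℝ k f z‖ ≤ D := by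
  have hso : IsOpen {x : E | x ≠ 0} := isOpen_compl_singleton
  have hcont : ContinuousOn (iteratedFDeriv ℝ k f) {x : E | x ≠ 0} :=
    (hf.continuousOn_iteratedFDerivWithin hk hso.uniqueDiffOn).congr
      (iteratedFDerivWithin_of_isOpen k hso).symm
  have hsub : sphere (0 : E) 1 ⊆ {x : E | x ≠ 0} := by
    intro z hz h0
    rw [mem_sphere_zero_iff_norm, h0] at hz
    simp at hz
  obtain ⟨D, hD⟩ := (isCompact_sphere (0 : E) 1).exists_bound_of_continuousOn (hcont.mono hsub)
  exact ⟨max D 0, le_max_right _ _, fun z hz =>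
    (hD z (by rwa [mem_sphere_zero_iff_norm])).trans (le_max_left _ _)⟩

theorem exists_homog_bound [FiniteDimensional ℝ E] {f : E → F} {m : WithTop ℕ∞} (k : ℕ)
    (hf : ContDiffOn ℝ m f {x : E | x ≠ 0}) (hk : (k : WithTop ℕ∞) ≤ m)
    (hhom : ∀ c : ℝ, 0 < c → ∀ z : E, f (c • z) = f z) :
    ∃ D, 0 ≤ D ∧ ∀ z : E, z ≠ 0 → ‖iteratedFDeriv ℝ k f z‖ ≤ D * ‖z‖⁻¹ ^ k := by
  obtain ⟨D, hD0, hD⟩ := exists_sphere_bound k hf hk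
  refine ⟨D, hD0, fun z hz => ?_⟩
  have hz0 : (0 : ℝ) < ‖z‖ := norm_pos_iff.mpr hz
  have h1 : ‖(‖z‖⁻¹ • z)‖ = 1 := by
    rw [norm_smul, norm_inv, norm_norm, inv_mul_cancel₀ hz0.ne']
  have hsc := norm_iteratedFDeriv_scale (f := f) k hz0 hz
  rw [show (fun x => f (‖z‖ • x)) = f from funext fun x => hhom _ hz0 x] at hsc
  exact hsc.trans (mul_le_mul_of_nonneg_right (hD _ h1) (by positivity))

end General
section Extension

variable {E : Type*} [NormedAddCommGroup E] [NormedSpace ℝ E]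
variable {F : Type*} [NormedAddCommGroup F] [NormedSpace ℝ F]

theorem hasFDerivAt_zero_ext {f : E → F} {δ : ℝ} (hδ : 0 < δ)
    (hf0 : f 0 = 0)
    (hdiff : ∀ z : E, z ≠ 0 → ‖z‖ < δ → DifferentiableAt ℝ f z)
    (hlim : Filter.Tendsto f (nhdsWithin (0 : E) {x | x ≠ 0}) (nhds 0))
    (hbound : ∀ ε : ℝ, 0 < ε → ∃ δ' : ℝ, 0 < δ' ∧ ∀ z : E, z ≠ 0 → ‖z‖ < δ' →
      ‖fderiv ℝ f z‖ ≤ ε) :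
    HasFDerivAt f (0 : E →L[ℝ] F) 0 := by
  rw [hasFDerivAt_iff_isLittleO_nhds_zero]
  rw [Asymptotics.isLittleO_iff]
  intro ε hε
  obtain ⟨δ', hδ'0, hδ'⟩ := hbound ε hε
  have hmem : {h : E | ‖h‖ < min δ δ'} ∈ nhds (0 : E) := by
    have : IsOpen {h : E | ‖h‖ < min δ δ'} := isOpen_lt continuous_norm continuous_const
    exact this.mem_nhds (by simp only [Set.mem_setOf_eq, norm_zero]; exact lt_min hδ hδ'0)
  filter_upwards [hmem] with w hw
  rcases eq_or_ne w 0 with rfl | hw0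
  · simp [hf0]
  · -- MVT on segments [t • w, w]
    simp only [zero_add, hf0, sub_zero, ContinuousLinearMap.zero_apply, sub_zero]
    have key : ∀ t : ℝ, t ∈ Set.Ioc (0:ℝ) 1 → ‖f w - f (t • w)‖ ≤ ε * ‖w‖ := by
      intro t ht
      have hseg : ∀ x ∈ segment ℝ (t • w) w, (x ≠ 0 ∧ ‖x‖ < min δ δ') := by
        intro x hx
        rw [segment_eq_image'] at hx
        obtain ⟨a, ha, rfl⟩ := hx
        have hx' : t • w + a • (w - t • w) = (t + a * (1 - t)) • w := by module
        show (t • w + a • (w - t • w)) ≠ 0 ∧ ‖t • w + a • (w - t • w)‖ < min δ δ'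
        rw [hx']
        have h1 : 0 < t + a * (1 - t) := by nlinarith [ht.1, ht.2, ha.1, ha.2]
        have h2 : t + a * (1 - t) ≤ 1 := by nlinarith [ht.1, ht.2, ha.1, ha.2]
        constructor
        · exact smul_ne_zero h1.ne' hw0
        · rw [norm_smul, Real.norm_eq_abs, abs_of_pos h1]
          calc (t + a * (1 - t)) * ‖w‖ ≤ 1 * ‖w‖ :=
                mul_le_mul_of_nonneg_right h2 (norm_nonneg w)
            _ = ‖w‖ := one_mul _
            _ < min δ δ' := hw
      have hmvt := Convex.norm_image_sub_le_of_norm_hasFDerivWithin_le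
        (f := f) (f' := fun x => fderiv ℝ f x) (s := segment ℝ (t • w) w) (C := ε)
        (fun x hx => ((hdiff x (hseg x hx).1
          ((hseg x hx).2.trans_le (min_le_left _ _))).hasFDerivAt).hasFDerivWithinAt)
        (fun x hx => hδ' x (hseg x hx).1 ((hseg x hx).2.trans_le (min_le_right _ _)))
        (convex_segment _ _) (left_mem_segment ℝ (t • w) w) (right_mem_segment ℝ (t • w) w)
      refine hmvt.trans ?_
      have : ‖w - t • w‖ = (1 - t) * ‖w‖ := by
        rw [show w - t • w = (1 - t) • w by rw [sub_smul, one_smul],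
          norm_smul, Real.norm_eq_abs, abs_of_nonneg (by linarith [ht.2])]
      rw [this]
      have : (1 - t) * ‖w‖ ≤ ‖w‖ := by nlinarith [ht.1, norm_nonneg w]
      exact mul_le_mul_of_nonneg_left this hε.le
    -- take the limit t → 0⁺
    haveI : (nhdsWithin (0:ℝ) (Set.Ioc (0:ℝ) 1)).NeBot := by
      apply mem_closure_iff_nhdsWithin_neBot.mp
      rw [closure_Ioc (one_ne_zero).symm]
      exact ⟨le_rfl, zero_le_one⟩
    have hmap : Filter.Tendsto (fun t : ℝ => t • w)
        (nhdsWithin (0:ℝ) (Set.Ioc (0:ℝ) 1)) (nhdsWithin (0 : E) {x | x ≠ 0}) := by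
      rw [tendsto_nhdsWithin_iff]
      constructor
      · have h1 : Filter.Tendsto (fun t : ℝ => t • w) (nhds 0) (nhds ((0:ℝ) • w)) :=
          ((continuous_id.smul continuous_const).tendsto 0)
        rw [zero_smul] at h1
        exact h1.mono_left nhdsWithin_le_nhds
      · filter_upwards [self_mem_nhdsWithin] with t ht
        exact smul_ne_zero ht.1.ne' hw0
    have htends : Filter.Tendsto (fun t : ℝ => ‖f w - f (t • w)‖)
        (nhdsWithin (0:ℝ) (Set.Ioc (0:ℝ) 1)) (nhds ‖f w - 0‖) :=
      (Filter.Tendsto.sub tendsto_const_nhds (hlim.comp hmap)).norm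
    have hev : ∀ᶠ t in nhdsWithin (0:ℝ) (Set.Ioc (0:ℝ) 1),
        ‖f w - f (t • w)‖ ≤ ε * ‖w‖ :=
      Filter.eventually_iff_exists_mem.mpr ⟨Set.Ioc 0 1, self_mem_nhdsWithin, key⟩
    have := le_of_tendsto htends hev
    rwa [sub_zero] at this

end Extension
section Extension2

universe uE uF

theorem extension_contDiffOn {E : Type uE} [NormedAddCommGroup E] [NormedSpace ℝ E]
    [DecidableEq E] (m : ℕ) :
    ∀ {F : Type (max uE uF)} [NormedAddCommGroup F] [NormedSpace ℝ F]
    (f : E → F) (K δ : ℝ), 0 < δ →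
    ContDiffOn ℝ m f (Metric.ball (0:E) δ \ {0}) →
    (∀ k : ℕ, k ≤ m → ∀ z : E, z ≠ 0 → ‖z‖ < δ →
      ‖iteratedFDeriv ℝ k f z‖ ≤ K * ‖z‖ ^ (m + 1 - k)) →
    ContDiffOn ℝ m (fun z => if z = (0:E) then 0 else f z) (Metric.ball (0:E) δ) := by
  induction m with
  | zero =>
    intro F _ _ f K δ hδ hf hb
    have hso : IsOpen (Metric.ball (0:E) δ \ {0}) :=
      Metric.isOpen_ball.sdiff isClosed_singleton
    have hev : ∀ z : E, z ≠ 0 →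
        (fun x => if x = (0:E) then 0 else f x) =ᶠ[nhds z] f := by
      intro z hz
      filter_upwards [isOpen_compl_singleton.mem_nhds hz] with x hx
      exact if_neg hx
    rw [Nat.cast_zero, contDiffOn_zero]
    intro z hz
    rcases eq_or_ne z 0 with rfl | hz0
    · have hsq : Filter.Tendsto (fun x => if x = (0:E) then 0 else f x) (nhds (0:E)) (nhds 0) := by
        apply squeeze_zero_norm' (a := fun x : E => K * ‖x‖)
        · filter_upwards [Metric.ball_mem_nhds (0:E) hδ] with x hx
          rcases eq_or_ne x 0 with rfl | hx0
          · simp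
          · rw [if_neg hx0]
            have := hb 0 le_rfl x hx0 (mem_ball_zero_iff.mp hx)
            rwa [norm_iteratedFDeriv_zero, pow_one] at this
        · have : Filter.Tendsto (fun x : E => K * ‖x‖) (nhds 0) (nhds (K * ‖(0:E)‖)) :=
            (continuous_const.mul continuous_norm).tendsto 0
          simpa using this
      have : ContinuousAt (fun x => if x = (0:E) then 0 else f x) 0 := by
        rw [ContinuousAt, if_pos rfl]; exact hsq
      exact this.continuousWithinAt
    · have hzball : z ∈ Metric.ball (0:E) δ \ {0} := ⟨hz, hz0⟩
      have hfc : ContinuousAt f z :=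
        (contDiffOn_zero.mp hf).continuousAt (hso.mem_nhds hzball)
      exact (hfc.congr (hev z hz0).symm).continuousWithinAt
  | succ m IH =>
    intro F _ _ f K δ hδ hf hb
    have hso : IsOpen (Metric.ball (0:E) δ \ {0}) :=
      Metric.isOpen_ball.sdiff isClosed_singleton
    have hev : ∀ z : E, z ≠ 0 →
        (fun x => if x = (0:E) then 0 else f x) =ᶠ[nhds z] f := by
      intro z hz
      filter_upwards [isOpen_compl_singleton.mem_nhds hz] with x hx
      exact if_neg hx
    have hfd : ∀ z : E, z ≠ 0 → ‖z‖ < δ → DifferentiableAt ℝ f z := by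
      intro z hz hzδ
      refine (hf.differentiableOn ?_).differentiableAt
        (hso.mem_nhds ⟨mem_ball_zero_iff.mpr hzδ, hz⟩)
      simp
    have hgd : ∀ z : E, z ≠ 0 → ‖z‖ < δ →
        DifferentiableAt ℝ (fun x => if x = (0:E) then 0 else f x) z := by
      intro z hz hzδ
      exact ((hev z hz).differentiableAt_iff).mpr (hfd z hz hzδ)
    have hfderivg : ∀ z : E, z ≠ 0 →
        fderiv ℝ (fun x => if x = (0:E) then 0 else f x) z = fderiv ℝ f z := by
      intro z hz
      exact Filter.EventuallyEq.fderiv_eq (hev z hz)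
    -- apply IH to the derivative
    have hf' : ContDiffOn ℝ m (fderiv ℝ f) (Metric.ball (0:E) δ \ {0}) := by
      apply hf.fderiv_of_isOpen hso
      exact_mod_cast le_rfl
    have hb' : ∀ k : ℕ, k ≤ m → ∀ z : E, z ≠ 0 → ‖z‖ < δ →
        ‖iteratedFDeriv ℝ k (fderiv ℝ f) z‖ ≤ K * ‖z‖ ^ (m + 1 - k) := by
      intro k hk z hz hzδ
      rw [norm_iteratedFDeriv_fderiv]
      have := hb (k+1) (by omega) z hz hzδ
      have he : m + 1 + 1 - (k + 1) = m + 1 - k := by omega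
      rwa [he] at this
    have hIH := IH (fderiv ℝ f) K δ hδ hf' hb'
    -- differentiability of the extension everywhere on the ball
    have hkey : ∀ z ∈ Metric.ball (0:E) δ, HasFDerivAt (fun x => if x = (0:E) then 0 else f x)
        (if z = (0:E) then 0 else fderiv ℝ f z) z := by
      intro z hz
      rcases eq_or_ne z 0 with rfl | hz0
      · rw [if_pos rfl]
        apply hasFDerivAt_zero_ext (f := fun x => if x = (0:E) then 0 else f x) hδ (if_pos rfl) hgd
        · -- limit of g at 0 within ≠ 0
          apply squeeze_zero_norm' (a := fun x : E => K * ‖x‖ ^ (m + 2))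
          · have hball : Metric.ball (0:E) δ ∈ nhdsWithin (0:E) {x | x ≠ 0} :=
              nhdsWithin_le_nhds (Metric.ball_mem_nhds (0:E) hδ)
            filter_upwards [self_mem_nhdsWithin, hball] with x hx hxb
            rw [if_neg hx]
            have := hb 0 (Nat.zero_le _) x hx (mem_ball_zero_iff.mp hxb)
            rwa [norm_iteratedFDeriv_zero, Nat.sub_zero] at this
          · have : Filter.Tendsto (fun x : E => K * ‖x‖ ^ (m+2)) (nhds 0)
                (nhds (K * ‖(0:E)‖ ^ (m+2))) :=
              (continuous_const.mul (continuous_norm.pow (m+2))).tendsto 0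
            simpa using this.mono_left nhdsWithin_le_nhds
        · -- smallness of the derivative
          intro ε hε
          refine ⟨min δ (min 1 (ε / (max K 0 + 1))), by positivity, fun z hz hzδ' => ?_⟩
          rw [hfderivg z hz]
          have h1 : ‖fderiv ℝ f z‖ = ‖iteratedFDeriv ℝ 1 f z‖ := by
            rw [← norm_iteratedFDeriv_zero (𝕜 := ℝ) (f := fderiv ℝ f) (x := z),
              norm_iteratedFDeriv_fderiv]
          have h2 := hb 1 (by omega) z hz (lt_of_lt_of_le hzδ' (min_le_left _ _))
          have he : m + 1 + 1 - 1 = m + 1 := by omega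
          rw [he] at h2
          have hz1 : ‖z‖ ≤ 1 :=
            le_of_lt (lt_of_lt_of_le hzδ' ((min_le_right _ _).trans (min_le_left _ _)))
          have hz2 : ‖z‖ ≤ ε / (max K 0 + 1) :=
            le_of_lt (lt_of_lt_of_le hzδ' ((min_le_right _ _).trans (min_le_right _ _)))
          rw [h1]
          calc ‖iteratedFDeriv ℝ 1 f z‖ ≤ K * ‖z‖ ^ (m+1) := h2
            _ ≤ (max K 0 + 1) * ‖z‖ := by
                have h3 : ‖z‖ ^ (m+1) ≤ ‖z‖ := by
                  have := pow_le_pow_of_le_one (norm_nonneg z) hz1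
                    (show 1 ≤ m+1 by omega)
                  simpa using this
                have h4 : K * ‖z‖ ^ (m+1) ≤ (max K 0) * ‖z‖ :=
                  mul_le_mul (le_max_left _ _) h3 (by positivity) (le_max_right _ _)
                nlinarith [norm_nonneg z]
            _ ≤ ε := by
                have hpos : (0:ℝ) < max K 0 + 1 := by positivity
                calc (max K 0 + 1) * ‖z‖ ≤ (max K 0 + 1) * (ε / (max K 0 + 1)) :=
                      mul_le_mul_of_nonneg_left hz2 hpos.le
                  _ = ε := by field_simp
      · rw [if_neg hz0]
        have hdf := (hfd z hz0 (mem_ball_zero_iff.mp hz)).hasFDerivAt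
        exact hdf.congr_of_eventuallyEq (hev z hz0)
    have hdiffOn : DifferentiableOn ℝ (fun x => if x = (0:E) then 0 else f x)
        (Metric.ball (0:E) δ) :=
      fun z hz => (hkey z hz).differentiableAt.differentiableWithinAt
    have hfd_eq : ∀ z ∈ Metric.ball (0:E) δ,
        fderiv ℝ (fun x => if x = (0:E) then 0 else f x) z
          = (if z = (0:E) then 0 else fderiv ℝ f z) :=
      fun z hz => (hkey z hz).fderiv
    have hcast : ((m+1:ℕ) : WithTop ℕ∞) = (m : WithTop ℕ∞) + 1 := by push_cast; rfl
    rw [hcast, contDiffOn_succ_iff_fderiv_of_isOpen Metric.isOpen_ball]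
    refine ⟨hdiffOn, ?_, hIH.congr hfd_eq⟩
    intro hcon
    exact absurd hcon (by simp)

end Extension2
namespace ALE4

variable {n : ℕ}

def q (z : Fin n → ℝ) : ℝ := ∑ i, z i ^ 2

lemma q_nonneg (z : Fin n → ℝ) : 0 ≤ q z := Finset.sum_nonneg fun i _ => sq_nonneg _

lemma q_eq_zero_iff {z : Fin n → ℝ} : q z = 0 ↔ z = 0 := by
  constructor
  · intro hq
    funext i
    have := (Finset.sum_eq_zero_iff_of_nonneg (fun i _ => sq_nonneg (z i))).mp hq i
      (Finset.mem_univ i)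
    have h2 : z i ^ 2 = 0 := this
    exact pow_eq_zero_iff two_ne_zero |>.mp h2
  · rintro rfl; simp [q]

lemma q_pos {z : Fin n → ℝ} (hz : z ≠ 0) : 0 < q z :=
  (q_nonneg z).lt_of_ne fun h => hz (q_eq_zero_iff.mp h.symm)

lemma euclNorm_eq (z : Fin n → ℝ) : euclNorm z = Real.sqrt (q z) := rfl

lemma euclNorm_sq (z : Fin n → ℝ) : euclNorm z ^ 2 = q z := Real.sq_sqrt (q_nonneg z)

lemma euclNorm_nonneg (z : Fin n → ℝ) : 0 ≤ euclNorm z := Real.sqrt_nonneg _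

lemma euclNorm_pos {z : Fin n → ℝ} (hz : z ≠ 0) : 0 < euclNorm z :=
  Real.sqrt_pos.mpr (q_pos hz)

lemma q_smul (c : ℝ) (z : Fin n → ℝ) : q (c • z) = c ^ 2 * q z := by
  simp only [q, Pi.smul_apply, smul_eq_mul, mul_pow, Finset.mul_sum]

lemma euclNorm_smul (c : ℝ) (z : Fin n → ℝ) : euclNorm (c • z) = |c| * euclNorm z := by
  rw [euclNorm_eq, euclNorm_eq, q_smul, Real.sqrt_mul (sq_nonneg c), Real.sqrt_sq_eq_abs]

lemma norm_le_euclNorm (z : Fin n → ℝ) : ‖z‖ ≤ euclNorm z := by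
  refine (pi_norm_le_iff_of_nonneg (euclNorm_nonneg z)).mpr fun i => ?_
  rw [Real.norm_eq_abs, ← Real.sqrt_sq_eq_abs, euclNorm_eq]
  exact Real.sqrt_le_sqrt (Finset.single_le_sum (fun j _ => sq_nonneg (z j))
    (Finset.mem_univ i))

lemma euclNorm_le (z : Fin n → ℝ) : euclNorm z ≤ Real.sqrt n * ‖z‖ := by
  rw [euclNorm_eq, ← Real.sqrt_sq (norm_nonneg z), ← Real.sqrt_mul (Nat.cast_nonneg n)]
  refine Real.sqrt_le_sqrt ?_
  calc q z = ∑ i, z i ^ 2 := rfl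
    _ ≤ ∑ _i : Fin n, ‖z‖ ^ 2 := by
        refine Finset.sum_le_sum fun i _ => ?_
        rw [← sq_abs, ← Real.norm_eq_abs]
        exact pow_le_pow_left₀ (norm_nonneg _) (norm_le_pi_norm z i) 2
    _ = n * ‖z‖ ^ 2 := by rw [Finset.sum_const, Finset.card_univ, Fintype.card_fin,
        nsmul_eq_mul]

lemma contDiff_q {m : WithTop ℕ∞} : ContDiff ℝ m (q (n := n)) :=
  ContDiff.sum fun i _ => ((ContinuousLinearMap.proj i :
    (Fin n → ℝ) →L[ℝ] ℝ).contDiff).pow 2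

lemma continuous_euclNorm : Continuous (euclNorm (n := n)) :=
  Real.continuous_sqrt.comp (contDiff_q (m := 0)).continuous

noncomputable def iota (z : Fin n → ℝ) : Fin n → ℝ := (q z)⁻¹ • z

lemma iota_smul {c : ℝ} (hc : c ≠ 0) (z : Fin n → ℝ) : iota (c • z) = c⁻¹ • iota z := by
  unfold iota
  rw [q_smul, smul_smul, smul_smul]
  congr 1
  rcases eq_or_ne (q z) 0 with h | h
  · simp [h, mul_inv]
  · rw [mul_inv]
    field_simp

lemma euclNorm_iota {z : Fin n → ℝ} (hz : z ≠ 0) : euclNorm (iota z) = (euclNorm z)⁻¹ := by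
  unfold iota
  rw [euclNorm_smul, abs_of_pos (inv_pos.mpr (q_pos hz)), ← euclNorm_sq]
  have he : euclNorm z ≠ 0 := (euclNorm_pos hz).ne'
  field_simp

lemma contDiffOn_iota {m : WithTop ℕ∞} :
    ContDiffOn ℝ m (iota (n := n)) {z : Fin n → ℝ | z ≠ 0} :=
  ContDiffOn.smul (contDiff_q.contDiffOn.inv fun z hz => (q_pos hz).ne') contDiffOn_id

end ALE4
namespace ALE4

variable {n : ℕ}

/-- `vecMulVec` as a bilinear continuous linear map. -/
noncomputable def vmvL : (Fin n → ℝ) →L[ℝ] (Fin n → ℝ) →L[ℝ] Matrix (Fin n) (Fin n) ℝ :=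
  LinearMap.toContinuousLinearMap <|
    (LinearMap.toContinuousLinearMap :
        ((Fin n → ℝ) →ₗ[ℝ] Matrix (Fin n) (Fin n) ℝ)
          ≃ₗ[ℝ] ((Fin n → ℝ) →L[ℝ] Matrix (Fin n) (Fin n) ℝ)).toLinearMap.comp
      (LinearMap.mk₂ ℝ Matrix.vecMulVec
        (fun u v w => by ext i j; simp [Matrix.vecMulVec_apply]; ring)
        (fun c u w => by ext i j; simp [Matrix.vecMulVec_apply]; ring)
        (fun u v w => by ext i j; simp [Matrix.vecMulVec_apply]; ring)
        (fun c u w => by ext i j; simp [Matrix.vecMulVec_apply]; ring))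

@[simp] lemma vmvL_apply (u v : Fin n → ℝ) : vmvL u v = Matrix.vecMulVec u v := rfl

/-- Matrix multiplication as a bilinear continuous linear map. -/
noncomputable def mulL : Matrix (Fin n) (Fin n) ℝ →L[ℝ] Matrix (Fin n) (Fin n) ℝ
    →L[ℝ] Matrix (Fin n) (Fin n) ℝ :=
  LinearMap.toContinuousLinearMap <|
    (LinearMap.toContinuousLinearMap :
        (Matrix (Fin n) (Fin n) ℝ →ₗ[ℝ] Matrix (Fin n) (Fin n) ℝ)
          ≃ₗ[ℝ] (Matrix (Fin n) (Fin n) ℝ →L[ℝ] Matrix (Fin n) (Fin n) ℝ)).toLinearMap.comp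
      (LinearMap.mul ℝ (Matrix (Fin n) (Fin n) ℝ))

@[simp] lemma mulL_apply (A B : Matrix (Fin n) (Fin n) ℝ) : mulL A B = A * B := rfl

/-- The degree-zero homogeneous reflection matrix `P z = I - 2 z zᵀ / ‖z‖²`. -/
noncomputable def Pm (z : Fin n → ℝ) : Matrix (Fin n) (Fin n) ℝ :=
  (1 : Matrix (Fin n) (Fin n) ℝ) - (2 * (q z)⁻¹) • vmvL z z

lemma Pm_homog (c : ℝ) (hc : 0 < c) (z : Fin n → ℝ) : Pm (c • z) = Pm z := by
  have hv : (vmvL (c • z)) (c • z) = (c * c) • (vmvL z) z := by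
    rw [_root_.map_smul vmvL c z, ContinuousLinearMap.smul_apply, _root_.map_smul, smul_smul]
  unfold Pm
  rw [q_smul, hv, smul_smul]
  have hs : 2 * (c ^ 2 * q z)⁻¹ * (c * c) = 2 * (q z)⁻¹ := by
    rcases eq_or_ne (q z) 0 with h | h
    · simp [h, mul_inv]
    · have hc' : c ≠ 0 := hc.ne'
      field_simp
  rw [hs]

lemma contDiffOn_Pm {m : WithTop ℕ∞} :
    ContDiffOn ℝ m (Pm (n := n)) {z : Fin n → ℝ | z ≠ 0} := by
  refine ContDiffOn.sub contDiffOn_const ?_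
  refine ContDiffOn.smul (𝕜' := ℝ) (f := fun z : Fin n → ℝ => 2 * (q z)⁻¹)
    (g := fun z : Fin n → ℝ => vmvL z z) ?_ ?_
  · exact contDiffOn_const.mul (contDiff_q.contDiffOn.inv fun z hz => (q_pos hz).ne')
  · exact ((vmvL.contDiff).clm_apply contDiff_id).contDiffOn

lemma vecMulVec_transpose (z : Fin n → ℝ) :
    (Matrix.vecMulVec z z)ᵀ = Matrix.vecMulVec z z := by
  ext i j
  simp [Matrix.vecMulVec_apply, Matrix.transpose_apply, mul_comm]

lemma vecMulVec_mul_self (z : Fin n → ℝ) :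
    Matrix.vecMulVec z z * Matrix.vecMulVec z z = q z • Matrix.vecMulVec z z := by
  ext i j
  simp only [Matrix.mul_apply, Matrix.vecMulVec_apply, Matrix.smul_apply, smul_eq_mul, q]
  calc ∑ k, z i * z k * (z k * z j) = ∑ k, z k ^ 2 * (z i * z j) :=
        Finset.sum_congr rfl fun k _ => by ring
    _ = (∑ k, z k ^ 2) * (z i * z j) := (Finset.sum_mul _ _ _).symm

lemma Pm_mul_Pm {z : Fin n → ℝ} (hz : z ≠ 0) : Pm z * Pm z = 1 := by
  have hq : q z ≠ 0 := (q_pos hz).ne'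
  unfold Pm
  rw [vmvL_apply]
  set b : ℝ := 2 * (q z)⁻¹ with hbdef
  set V := Matrix.vecMulVec z z with hV
  have hVV : V * V = q z • V := vecMulVec_mul_self z
  have hb : b * b * q z = b + b := by
    rw [hbdef]
    field_simp
    ring
  have expand : ((1 : Matrix (Fin n) (Fin n) ℝ) - b • V) * (1 - b • V)
      = 1 - b • V - b • V + (b * b * q z) • V := by
    simp only [sub_mul, mul_sub, one_mul, mul_one, Matrix.smul_mul, Matrix.mul_smul,
      smul_smul, hVV]
    rw [show b * (b * q z) = b * b * q z from by ring]
    abel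
  rw [expand, hb, add_smul]
  abel

lemma invertedMetric_eq (h : (Fin n → ℝ) → Matrix (Fin n) (Fin n) ℝ) {z : Fin n → ℝ}
    (hz : z ≠ 0) : invertedMetric h z = 1 + Pm z * (h (iota z) * Pm z) := by
  have hq : q z ≠ 0 := (q_pos hz).ne'
  have hB : inversionDiff z = (q z)⁻¹ • Pm z := by
    unfold inversionDiff Pm
    rw [vmvL_apply]
    rfl
  have hBT : (inversionDiff z)ᵀ = inversionDiff z := by
    rw [hB]
    unfold Pm
    rw [vmvL_apply, Matrix.transpose_smul, Matrix.transpose_sub, Matrix.transpose_one,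
      Matrix.transpose_smul, vecMulVec_transpose]
  have hIM : invertedMetric h z
      = (q z ^ 2) • ((inversionDiff z)ᵀ * (1 + h (iota z)) * inversionDiff z) := rfl
  rw [hIM, hBT, hB, Matrix.smul_mul, Matrix.smul_mul, Matrix.mul_smul, smul_smul, smul_smul]
  have hscal : q z ^ 2 * (q z)⁻¹ * (q z)⁻¹ = 1 := by
    field_simp
  rw [hscal, one_smul]
  have : Pm z * (1 + h (iota z)) * Pm z
      = Pm z * Pm z + Pm z * (h (iota z) * Pm z) := by
    rw [mul_add, add_mul, mul_one, mul_assoc]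
  rw [this, Pm_mul_Pm hz]

end ALE4
namespace ALE4

variable {n : ℕ}

lemma inv_gt_aux {a b : ℝ} (ha : 0 < a) (hb : 0 < b) (h : a < b⁻¹) : b < a⁻¹ := by
  have h1 : a * b < 1 := by
    have := mul_lt_mul_of_pos_right h hb
    rwa [inv_mul_cancel₀ hb.ne'] at this
  have h2 := mul_lt_mul_of_pos_left h1 (inv_pos.mpr ha)
  rwa [← mul_assoc, inv_mul_cancel₀ ha.ne', one_mul, mul_one] at h2

lemma sqrtn_ge_one (hn : 1 ≤ n) : 1 ≤ Real.sqrt n := by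
  rw [show (1:ℝ) = Real.sqrt 1 by rw [Real.sqrt_one]]
  exact Real.sqrt_le_sqrt (by exact_mod_cast hn)

/-- The central composition estimate: iterated derivatives of `h ∘ ι` decay like `‖z‖^(τ-k)`. -/
lemma phi_bound (hn : 1 ≤ n) {R C : ℝ} (hR : 0 < R) (hC : 0 ≤ C) {τ μ : ℕ} (hτ : 3 ≤ τ)
    (hμ : τ - 1 ≤ μ) {h : (Fin n → ℝ) → Matrix (Fin n) (Fin n) ℝ}
    (hsmooth : ContDiffOn ℝ μ h {y : Fin n → ℝ | R < euclNorm y})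
    (hderiv : ∀ k : ℕ, k ≤ μ → ∀ y : Fin n → ℝ, R < euclNorm y →
      ‖iteratedFDerivWithin ℝ k h {y' : Fin n → ℝ | R < euclNorm y'} y‖
        ≤ C * euclNorm y ^ (-(τ + k : ℝ))) :
    ∃ Kφ : ℝ, 0 ≤ Kφ ∧ ∀ k : ℕ, k ≤ τ - 1 → ∀ z : Fin n → ℝ, z ≠ 0 →
      ‖z‖ < (2 * Real.sqrt n * R)⁻¹ →
      ‖iteratedFDeriv ℝ k (fun x => h (iota x)) z‖ ≤ Kφ * ‖z‖ ^ (τ - k) := by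
  classical
  set sn : ℝ := Real.sqrt n with hsn
  have hsn1 : 1 ≤ sn := sqrtn_ge_one hn
  have hsn0 : 0 < sn := lt_of_lt_of_le one_pos hsn1
  set S : Set (Fin n → ℝ) := {y | R < euclNorm y} with hS
  have hSopen : IsOpen S := isOpen_lt continuous_const continuous_euclNorm
  -- bounds for the derivatives of iota on the unit sphere
  have hiota_ex : ∀ i : ℕ, ∃ Di : ℝ, 0 ≤ Di ∧ ∀ z : Fin n → ℝ, ‖z‖ = 1 →
      ‖iteratedFDeriv ℝ i (iota (n := n)) z‖ ≤ Di := fun i =>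
    exists_sphere_bound i (contDiffOn_iota (m := (i : WithTop ℕ∞))) le_rfl
  choose Df hDf0 hDf using hiota_ex
  set D : ℝ := 1 + ∑ i ∈ Finset.range τ, Df i with hD
  have hD1 : 1 ≤ D := by
    have : 0 ≤ ∑ i ∈ Finset.range τ, Df i :=
      Finset.sum_nonneg fun i _ => hDf0 i
    simp only [hD]; linarith
  have hD0 : 0 ≤ D := le_trans zero_le_one hD1
  have hDle : ∀ i : ℕ, i ≤ τ - 1 → Df i ≤ D := by
    intro i hi
    have h1 : Df i ≤ ∑ j ∈ Finset.range τ, Df j :=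
      Finset.single_le_sum (fun j _ => hDf0 j) (Finset.mem_range.mpr (by omega))
    simp only [hD]; linarith
  refine ⟨(τ-1).factorial * (C * (2*sn)^(τ+μ)) * D^(τ-1), by positivity, ?_⟩
  intro k hk z hz hzδ
  have hkμ : k ≤ μ := le_trans hk hμ
  set r : ℝ := ‖z‖ with hr
  have hr0 : 0 < r := norm_pos_iff.mpr hz
  -- Step 1: rescale
  have step1 := norm_iteratedFDeriv_scale (f := fun x => h (iota x)) k hr0 hz
  -- Step 2: the rescaled function is (h ∘ (r⁻¹ • ·)) ∘ iota
  have hri : (r⁻¹ : ℝ) ≠ 0 := inv_ne_zero hr0.ne'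
  set eL : (Fin n → ℝ) →L[ℝ] (Fin n → ℝ) :=
    ((smulCLE r⁻¹ hri : (Fin n → ℝ) ≃L[ℝ] (Fin n → ℝ)) : (Fin n → ℝ) →L[ℝ] (Fin n → ℝ))
    with heL
  have step2 : (fun x => h (iota (r • x))) = (h ∘ eL) ∘ iota := by
    funext x
    simp only [Function.comp_apply]
    rw [iota_smul hr0.ne']
    rfl
  set w₀ : Fin n → ℝ := r⁻¹ • z with hw₀def
  have hw₀ : ‖w₀‖ = 1 := by
    rw [hw₀def, norm_smul, norm_inv, Real.norm_eq_abs, abs_of_pos hr0, ← hr,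
      inv_mul_cancel₀ hr0.ne']
  have hw₀0 : w₀ ≠ 0 := fun h0 => by rw [h0] at hw₀; simp at hw₀
  -- the annulus
  set A : Set (Fin n → ℝ) := {x | 1/2 < ‖x‖ ∧ ‖x‖ < 2} with hA
  have hAopen : IsOpen A := by
    have : A = (fun x : Fin n → ℝ => ‖x‖) ⁻¹' (Set.Ioo (1/2) 2) := by
      ext x; simp [hA, Set.mem_Ioo]
    rw [this]
    exact IsOpen.preimage continuous_norm isOpen_Ioo
  have hw₀A : w₀ ∈ A := by constructor <;> rw [hw₀] <;> norm_num
  have hAne : A ⊆ {x : Fin n → ℝ | x ≠ 0} := by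
    intro x hx h0
    have h1 := hx.1
    rw [h0, norm_zero] at h1
    linarith
  -- the target set
  set t : Set (Fin n → ℝ) := ⇑eL ⁻¹' S with ht
  have htopen : IsOpen t := hSopen.preimage eL.continuous
  -- mapping property
  have hmaps : Set.MapsTo (iota (n := n)) A t := by
    intro x hx
    have hx0 : x ≠ 0 := hAne hx
    have hex : 0 < euclNorm x := euclNorm_pos hx0
    show eL (iota x) ∈ S
    have heval : eL (iota x) = r⁻¹ • iota x := rfl
    rw [heval, hS]
    show R < euclNorm (r⁻¹ • iota x)
    rw [euclNorm_smul, abs_of_pos (inv_pos.mpr hr0), euclNorm_iota hx0]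
    have h1 : euclNorm x < 2 * sn := by
      calc euclNorm x ≤ sn * ‖x‖ := euclNorm_le x
        _ < sn * 2 := by
            have := hx.2
            exact mul_lt_mul_of_pos_left this hsn0
        _ = 2 * sn := by ring
    have h2 : (2*sn)⁻¹ < (euclNorm x)⁻¹ := by
      apply inv_gt_aux hex (by positivity)
      rwa [inv_inv]
    have h3 : 2*sn*R < r⁻¹ := inv_gt_aux hr0 (by positivity) hzδ
    calc R = (2*sn*R) * (2*sn)⁻¹ := by field_simp
      _ < r⁻¹ * (euclNorm x)⁻¹ := by
          apply mul_lt_mul h3 h2.le (by positivity) (by positivity)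
  have hw₀t : iota w₀ ∈ t := hmaps hw₀A
  -- smoothness of the two factors
  have hg : ContDiffOn ℝ μ (h ∘ eL) t := hsmooth.comp_continuousLinearMap eL
  have hf : ContDiffOn ℝ μ (iota (n := n)) A := contDiffOn_iota.mono hAne
  -- bound on outer derivatives
  have hCg : ∀ j : ℕ, j ≤ k →
      ‖iteratedFDerivWithin ℝ j (h ∘ eL) t (iota w₀)‖ ≤ C * (2*sn)^(τ+μ) * r^τ := by
    intro j hj
    have hjμ : j ≤ μ := le_trans hj hkμ
    have hkey := ContinuousLinearEquiv.iteratedFDerivWithin_comp_right (𝕜 := ℝ)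
      (smulCLE r⁻¹ hri) h hSopen.uniqueDiffOn (x := iota w₀) hw₀t j
    rw [show ⇑(smulCLE (E := Fin n → ℝ) r⁻¹ hri) ⁻¹' S = t from rfl] at hkey
    have hcoe : h ∘ ⇑(smulCLE (E := Fin n → ℝ) r⁻¹ hri) = h ∘ eL := rfl
    rw [hcoe] at hkey
    rw [hkey]
    set y : Fin n → ℝ := (smulCLE (E := Fin n → ℝ) r⁻¹ hri) (iota w₀) with hy
    have hyS : y ∈ S := hw₀t
    have hnorm1 : ‖(iteratedFDerivWithin ℝ j h S y).compContinuousLinearMap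
        (fun _ => ((smulCLE (E := Fin n → ℝ) r⁻¹ hri :
          (Fin n → ℝ) ≃L[ℝ] (Fin n → ℝ)) : (Fin n → ℝ) →L[ℝ] (Fin n → ℝ)))‖
        ≤ ‖iteratedFDerivWithin ℝ j h S y‖ * (r⁻¹)^j := by
      apply norm_compCLM_le
      refine (smulCLE_norm_le hri).trans ?_
      rw [abs_of_pos (inv_pos.mpr hr0)]
    refine hnorm1.trans ?_
    have hder := hderiv j hjμ y hyS
    -- convert the rpow bound
    have hey : 0 < euclNorm y := lt_trans hR hyS
    have hrpow : euclNorm y ^ (-(τ + j : ℝ)) = ((euclNorm y)⁻¹)^(τ+j) := by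
      rw [show -(τ + j : ℝ) = -(((τ + j : ℕ) : ℝ)) by push_cast; ring,
        Real.rpow_neg hey.le, Real.rpow_natCast, inv_pow]
    have heyinv : (euclNorm y)⁻¹ ≤ r * (2*sn) := by
      have hyeval : y = r⁻¹ • iota w₀ := rfl
      rw [hyeval, euclNorm_smul, abs_of_pos (inv_pos.mpr hr0), euclNorm_iota hw₀0,
        mul_inv, inv_inv, inv_inv]
      have : euclNorm w₀ ≤ sn := by
        calc euclNorm w₀ ≤ sn * ‖w₀‖ := euclNorm_le w₀
          _ = sn := by rw [hw₀, mul_one]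
      calc r * euclNorm w₀ ≤ r * sn := mul_le_mul_of_nonneg_left this hr0.le
        _ ≤ r * (2*sn) := by nlinarith
    have hbound2 : euclNorm y ^ (-(τ + j : ℝ)) ≤ (r * (2*sn))^(τ+j) := by
      rw [hrpow]
      exact pow_le_pow_left₀ (by positivity) heyinv _
    calc ‖iteratedFDerivWithin ℝ j h S y‖ * (r⁻¹)^j
        ≤ (C * (r * (2*sn))^(τ+j)) * (r⁻¹)^j := by
          apply mul_le_mul_of_nonneg_right _ (by positivity)
          exact hder.trans (mul_le_mul_of_nonneg_left hbound2 hC)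
      _ = C * (2*sn)^(τ+j) * (r^(τ+j) * (r⁻¹)^j) := by
          rw [mul_pow]; ring
      _ = C * (2*sn)^(τ+j) * r^τ := by
          congr 1
          rw [show τ + j = τ + j from rfl, pow_add, mul_assoc, ← mul_pow,
            mul_inv_cancel₀ hr0.ne', one_pow, mul_one]
      _ ≤ C * (2*sn)^(τ+μ) * r^τ := by
          apply mul_le_mul_of_nonneg_right _ (by positivity)
          apply mul_le_mul_of_nonneg_left _ hC
          exact pow_le_pow_right₀ (by linarith) (by omega)
  -- bound on inner derivatives
  have hDb : ∀ i : ℕ, 1 ≤ i → i ≤ k →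
      ‖iteratedFDerivWithin ℝ i (iota (n := n)) A w₀‖ ≤ D^i := by
    intro i hi1 hik
    rw [iteratedFDerivWithin_of_isOpen i hAopen hw₀A]
    calc ‖iteratedFDeriv ℝ i (iota (n := n)) w₀‖ ≤ Df i := hDf i w₀ hw₀
      _ ≤ D := hDle i (le_trans hik hk)
      _ ≤ D^i := le_self_pow₀ hD1 (by omega)
  -- apply the Faà di Bruno bound
  have hcomp : ‖iteratedFDerivWithin ℝ k ((h ∘ eL) ∘ iota) A w₀‖
      ≤ k.factorial * (C * (2*sn)^(τ+μ) * r^τ) * D^k :=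
    norm_iteratedFDerivWithin_comp_le (𝕜 := ℝ) (g := h ∘ eL)
      (f := iota (n := n)) (n := k) (N := (μ : WithTop ℕ∞)) hg hf (by exact_mod_cast hkμ)
      htopen.uniqueDiffOn hAopen.uniqueDiffOn hmaps hw₀A hCg hDb
  have hglobal : ‖iteratedFDeriv ℝ k (fun x => h (iota (r • x))) w₀‖
      ≤ k.factorial * (C * (2*sn)^(τ+μ) * r^τ) * D^k := by
    rw [show (fun x : Fin n → ℝ => h (iota (r • x))) = (h ∘ ⇑eL) ∘ iota from step2,
      ← iteratedFDerivWithin_of_isOpen k hAopen hw₀A]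
    exact hcomp
  -- put everything together
  have hbeta : (fun x : Fin n → ℝ => (fun y => h (iota y)) (r • x))
      = (fun x : Fin n → ℝ => h (iota (r • x))) := rfl
  rw [hbeta] at step1
  have hpow1 : r ^ (τ - k) * r ^ k = r ^ τ := by
    rw [← pow_add]; congr 1; omega
  have hpow : r ^ τ * r⁻¹ ^ k = r ^ (τ - k) := by
    rw [← hpow1, mul_assoc, ← mul_pow, mul_inv_cancel₀ hr0.ne', one_pow, mul_one]
  calc ‖iteratedFDeriv ℝ k (fun x => h (iota x)) z‖
      ≤ ‖iteratedFDeriv ℝ k (fun x => h (iota (r • x))) w₀‖ * r⁻¹ ^ k := step1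
    _ ≤ (k.factorial * (C * (2*sn)^(τ+μ) * r^τ) * D^k) * r⁻¹ ^ k :=
        mul_le_mul_of_nonneg_right hglobal (by positivity)
    _ = (k.factorial * (C * (2*sn)^(τ+μ)) * D^k) * (r^τ * r⁻¹^k) := by ring
    _ = (k.factorial * (C * (2*sn)^(τ+μ)) * D^k) * r^(τ-k) := by rw [hpow]
    _ ≤ ((τ-1).factorial * (C * (2*sn)^(τ+μ)) * D^(τ-1)) * r^(τ-k) := by
        apply mul_le_mul_of_nonneg_right _ (by positivity)
        apply mul_le_mul
        · apply mul_le_mul_of_nonneg_right _ (by positivity)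
          exact_mod_cast Nat.factorial_le hk
        · exact pow_le_pow_right₀ hD1 hk
        · positivity
        · positivity

end ALE4
namespace ALE4

lemma pow_split {x : ℝ} (hx : x ≠ 0) {τ k i : ℕ} (hik : i ≤ k) (hkτ : k ≤ τ) :
    x ^ (τ - i) * x⁻¹ ^ (k - i) = x ^ (τ - k) := by
  have h1 : τ - i = (τ - k) + (k - i) := by omega
  rw [h1, pow_add, mul_assoc, ← mul_pow, mul_inv_cancel₀ hx, one_pow, mul_one]

lemma pow_split' {x : ℝ} (hx : x ≠ 0) {τ k i : ℕ} (hik : i ≤ k) (hkτ : k ≤ τ) :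
    x⁻¹ ^ i * x ^ (τ - (k - i)) = x ^ (τ - k) := by
  have h1 : τ - (k - i) = (τ - k) + i := by omega
  rw [h1]
  calc x⁻¹^i * x^((τ-k)+i) = (x⁻¹^i * x^i) * x^(τ-k) := by rw [pow_add]; ring
    _ = x^(τ-k) := by rw [← mul_pow, inv_mul_cancel₀ hx, one_pow, one_mul]

end ALE4

open ALE4 in
set_option maxHeartbeats 2000000 in
/-- **Lemma 4** (conformal one-point completion of an ALE end), in coordinates: if the ALE
metric coefficients `g = I + h` are of order `(τ, μ)` with `μ ≥ τ − 1 ≥ 2`, then the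
conformally rescaled metric `ḡ = ρ⁻⁴ g` in inverted coordinates extends as a `C^{τ−1}`
matrix-valued map across `z = 0`, with value `I` there. -/
theorem invertedMetric_extends_CtauMinusOne
    (n : ℕ) (hn : 1 ≤ n) (R C : ℝ) (hR : 0 < R) (hC : 0 ≤ C)
    (τ μ : ℕ) (hτ : 3 ≤ τ) (hμ : τ - 1 ≤ μ)
    (h : (Fin n → ℝ) → Matrix (Fin n) (Fin n) ℝ)
    (hsmooth : ContDiffOn ℝ μ h {y : Fin n → ℝ | R < euclNorm y})
    (hderiv : ∀ k : ℕ, k ≤ μ → ∀ y : Fin n → ℝ, R < euclNorm y →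
      ‖iteratedFDerivWithin ℝ k h {y' : Fin n → ℝ | R < euclNorm y'} y‖
        ≤ C * euclNorm y ^ (-(τ + k : ℝ))) :
    ∃ G : (Fin n → ℝ) → Matrix (Fin n) (Fin n) ℝ,
      ContDiffOn ℝ (τ - 1 : ℕ) G {z : Fin n → ℝ | euclNorm z < R⁻¹} ∧
      (∀ z : Fin n → ℝ, z ≠ 0 → euclNorm z < R⁻¹ → G z = invertedMetric h z) ∧
      G 0 = 1 := by
  classical
  letI : NormedAddCommGroup (Matrix (Fin n) (Fin n) ℝ →L[ℝ] Matrix (Fin n) (Fin n) ℝ) :=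
    ContinuousLinearMap.toNormedAddCommGroup
  letI : NormedSpace ℝ (Matrix (Fin n) (Fin n) ℝ →L[ℝ] Matrix (Fin n) (Fin n) ℝ) :=
    ContinuousLinearMap.toNormedSpace
  letI : NormedAddCommGroup (Matrix (Fin n) (Fin n) ℝ →L[ℝ]
      Matrix (Fin n) (Fin n) ℝ →L[ℝ] Matrix (Fin n) (Fin n) ℝ) :=
    ContinuousLinearMap.toNormedAddCommGroup
  set sn : ℝ := Real.sqrt n with hsn
  have hsn1 : 1 ≤ sn := sqrtn_ge_one hn
  have hsn0 : 0 < sn := lt_of_lt_of_le one_pos hsn1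
  set δ : ℝ := (2 * sn * R)⁻¹ with hδ
  have hδ0 : 0 < δ := by positivity
  -- the correction term
  set φ : (Fin n → ℝ) → Matrix (Fin n) (Fin n) ℝ := fun x => h (iota x) with hφdef
  set Fc : (Fin n → ℝ) → Matrix (Fin n) (Fin n) ℝ :=
    fun z => (mulL (Pm z)) ((mulL (φ z)) (Pm z)) with hFcdef
  -- sets
  set s' : Set (Fin n → ℝ) := {z | z ≠ 0 ∧ euclNorm z < R⁻¹} with hs'
  have hs'open : IsOpen s' := by
    have : s' = {z : Fin n → ℝ | z ≠ 0} ∩ {z | euclNorm z < R⁻¹} := rfl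
    rw [this]
    exact isOpen_compl_singleton.inter (isOpen_lt continuous_euclNorm continuous_const)
  set s₀ : Set (Fin n → ℝ) := Metric.ball (0 : Fin n → ℝ) δ \ {0} with hs₀
  have hs₀open : IsOpen s₀ := Metric.isOpen_ball.sdiff isClosed_singleton
  have hsub : s₀ ⊆ s' := by
    rintro z ⟨hzb, hz0⟩
    refine ⟨hz0, ?_⟩
    have h1 : ‖z‖ < δ := mem_ball_zero_iff.mp hzb
    calc euclNorm z ≤ sn * ‖z‖ := euclNorm_le z
      _ < sn * δ := mul_lt_mul_of_pos_left h1 hsn0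
      _ = 1 / (2 * R) := by rw [hδ]; field_simp
      _ ≤ 1 / R := one_div_le_one_div_of_le hR (by linarith)
      _ = R⁻¹ := one_div R
  -- smoothness of φ on s'
  have hmapsS : Set.MapsTo iota s' {y : Fin n → ℝ | R < euclNorm y} := by
    rintro z ⟨hz0, hze⟩
    show R < euclNorm (iota z)
    rw [euclNorm_iota hz0]
    exact inv_gt_aux (euclNorm_pos hz0) hR hze
  have hφμ : ContDiffOn ℝ μ φ s' :=
    hsmooth.comp (contDiffOn_iota.mono fun z hz => hz.1) hmapsS
  have hτ1μ : ((τ - 1 : ℕ) : WithTop ℕ∞) ≤ (μ : WithTop ℕ∞) := by exact_mod_cast hμ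
  have hφ : ContDiffOn ℝ (τ - 1 : ℕ) φ s' := hφμ.of_le hτ1μ
  have hPs' : ContDiffOn ℝ (τ - 1 : ℕ) Pm s' := contDiffOn_Pm.mono fun z hz => hz.1
  have hinner : ContDiffOn ℝ (τ - 1 : ℕ) (fun z => (mulL (φ z)) (Pm z)) s' :=
    ContDiffOn.clm_apply ((mulL (n := n)).contDiff.comp_contDiffOn hφ) hPs'
  have hFcs' : ContDiffOn ℝ (τ - 1 : ℕ) Fc s' :=
    ContDiffOn.clm_apply ((mulL (n := n)).contDiff.comp_contDiffOn hPs') hinner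
  -- derivative bounds for φ
  obtain ⟨Kφ, hKφ0, hKφ⟩ := phi_bound hn hR hC hτ hμ hsmooth hderiv
  -- derivative bounds for Pm
  have hPm_ex : ∀ i : ℕ, ∃ Ki : ℝ, 0 ≤ Ki ∧ ∀ z : Fin n → ℝ, z ≠ 0 →
      ‖iteratedFDeriv ℝ i (Pm (n := n)) z‖ ≤ Ki * ‖z‖⁻¹ ^ i := fun i =>
    exists_homog_bound i (contDiffOn_Pm (m := (i : WithTop ℕ∞))) le_rfl
      (fun c hc z => Pm_homog c hc z)
  choose Kpf hKpf0 hKpf using hPm_ex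
  set Kp : ℝ := 1 + ∑ i ∈ Finset.range τ, Kpf i with hKp
  have hKp1 : 1 ≤ Kp := by
    have : 0 ≤ ∑ i ∈ Finset.range τ, Kpf i := Finset.sum_nonneg fun i _ => hKpf0 i
    simp only [hKp]; linarith
  have hKp0 : 0 ≤ Kp := le_trans zero_le_one hKp1
  have hKple : ∀ i : ℕ, i ≤ τ - 1 → ∀ z : Fin n → ℝ, z ≠ 0 →
      ‖iteratedFDeriv ℝ i (Pm (n := n)) z‖ ≤ Kp * ‖z‖⁻¹ ^ i := by
    intro i hi z hz
    refine (hKpf i z hz).trans ?_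
    apply mul_le_mul_of_nonneg_right _ (by positivity)
    have h1 : Kpf i ≤ ∑ j ∈ Finset.range τ, Kpf j :=
      Finset.single_le_sum (fun j _ => hKpf0 j) (Finset.mem_range.mpr (by omega))
    simp only [hKp]; linarith
  set bM : ℝ := ‖(mulL (n := n))‖ with hbM
  have hbM0 : 0 ≤ bM := by rw [hbM]; positivity
  -- within-derivative bounds on s₀
  have hφs₀ : ContDiffOn ℝ (τ - 1 : ℕ) φ s₀ := hφ.mono hsub
  have hPs₀ : ContDiffOn ℝ (τ - 1 : ℕ) Pm s₀ := hPs'.mono hsub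
  have hmulφ : ContDiffOn ℝ (τ - 1 : ℕ) (fun z => mulL (φ z)) s₀ :=
    (mulL (n := n)).contDiff.comp_contDiffOn hφs₀
  have hmulP : ContDiffOn ℝ (τ - 1 : ℕ) (fun z => mulL (Pm z)) s₀ :=
    (mulL (n := n)).contDiff.comp_contDiffOn hPs₀
  have hinner₀ : ContDiffOn ℝ (τ - 1 : ℕ) (fun z => (mulL (φ z)) (Pm z)) s₀ :=
    hinner.mono hsub
  -- bounds for iterated derivatives of z ↦ mulL (φ z) within s₀
  have hWφ : ∀ i : ℕ, i ≤ τ - 1 → ∀ z ∈ s₀,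
      ‖iteratedFDerivWithin ℝ i (fun z => mulL (φ z)) s₀ z‖
        ≤ bM * (Kφ * ‖z‖ ^ (τ - i)) := by
    intro i hi z hz
    have hcomp := ContinuousLinearMap.iteratedFDerivWithin_comp_left (𝕜 := ℝ)
      (f := φ) (mulL (n := n)) (hφs₀ z hz) hs₀open.uniqueDiffOn hz
      (i := i) (by exact_mod_cast hi)
    refine (congrArg norm hcomp).trans_le ?_
    refine (ContinuousLinearMap.norm_compContinuousMultilinearMap_le _ _).trans ?_
    apply mul_le_mul_of_nonneg_left _ hbM0
    rw [iteratedFDerivWithin_of_isOpen i hs₀open hz]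
    exact hKφ i hi z hz.2 (mem_ball_zero_iff.mp hz.1)
  have hWP : ∀ i : ℕ, i ≤ τ - 1 → ∀ z ∈ s₀,
      ‖iteratedFDerivWithin ℝ i (Pm (n := n)) s₀ z‖ ≤ Kp * ‖z‖⁻¹ ^ i := by
    intro i hi z hz
    rw [iteratedFDerivWithin_of_isOpen i hs₀open hz]
    exact hKple i hi z hz.2
  -- first product bound
  set K₁ : ℝ := 2 ^ (τ - 1) * (bM * Kφ * Kp) with hK₁
  have hK₁0 : 0 ≤ K₁ := by positivity
  have hWinner : ∀ k : ℕ, k ≤ τ - 1 → ∀ z ∈ s₀,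
      ‖iteratedFDerivWithin ℝ k (fun z => (mulL (φ z)) (Pm z)) s₀ z‖
        ≤ K₁ * ‖z‖ ^ (τ - k) := by
    intro k hk z hz
    have hz0 : z ≠ 0 := hz.2
    have hzn : ‖z‖ ≠ 0 := norm_ne_zero_iff.mpr hz0
    have happ := norm_iteratedFDerivWithin_clm_apply (𝕜 := ℝ)
      (f := fun z => mulL (φ z)) (g := Pm) hmulφ hPs₀ hs₀open.uniqueDiffOn hz
      (by exact_mod_cast hk : (k : WithTop ℕ∞) ≤ ((τ - 1 : ℕ) : WithTop ℕ∞))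
    refine happ.trans ?_
    have hterm : ∀ i ∈ Finset.range (k + 1),
        (k.choose i : ℝ) * ‖iteratedFDerivWithin ℝ i (fun z => mulL (φ z)) s₀ z‖ *
          ‖iteratedFDerivWithin ℝ (k - i) Pm s₀ z‖
        ≤ (k.choose i : ℝ) * ((bM * Kφ * Kp) * ‖z‖ ^ (τ - k)) := by
      intro i hi
      have hik : i ≤ k := by
        have := Finset.mem_range.mp hi; omega
      have h1 := hWφ i (le_trans hik hk) z hz
      have h2 := hWP (k - i) (by omega) z hz
      calc (k.choose i : ℝ) * ‖iteratedFDerivWithin ℝ i (fun z => mulL (φ z)) s₀ z‖ *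
            ‖iteratedFDerivWithin ℝ (k - i) Pm s₀ z‖
          ≤ (k.choose i : ℝ) * (bM * (Kφ * ‖z‖ ^ (τ - i))) * (Kp * ‖z‖⁻¹ ^ (k - i)) := by
            apply mul_le_mul (mul_le_mul_of_nonneg_left h1 (by positivity)) h2
              (norm_nonneg _) (by positivity)
        _ = (k.choose i : ℝ) * ((bM * Kφ * Kp) * (‖z‖ ^ (τ - i) * ‖z‖⁻¹ ^ (k - i))) := by
            ring
        _ = (k.choose i : ℝ) * ((bM * Kφ * Kp) * ‖z‖ ^ (τ - k)) := by
            rw [pow_split hzn hik (by omega)]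
    refine (Finset.sum_le_sum hterm).trans ?_
    rw [← Finset.sum_mul]
    have hsum : (∑ i ∈ Finset.range (k + 1), (k.choose i : ℝ)) = 2 ^ k := by
      exact_mod_cast Nat.sum_range_choose k
    rw [hsum, hK₁]
    have h2k : (2:ℝ) ^ k ≤ 2 ^ (τ - 1) := pow_le_pow_right₀ one_le_two hk
    calc (2:ℝ) ^ k * ((bM * Kφ * Kp) * ‖z‖ ^ (τ - k))
        ≤ 2 ^ (τ-1) * ((bM * Kφ * Kp) * ‖z‖ ^ (τ - k)) :=
          mul_le_mul_of_nonneg_right h2k (by positivity)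
      _ = 2 ^ (τ-1) * (bM * Kφ * Kp) * ‖z‖ ^ (τ - k) := by ring
  -- second product bound
  set K₂ : ℝ := 2 ^ (τ - 1) * (bM * Kp * K₁) with hK₂
  have hK₂0 : 0 ≤ K₂ := by positivity
  have hWFc : ∀ k : ℕ, k ≤ τ - 1 → ∀ z ∈ s₀,
      ‖iteratedFDerivWithin ℝ k Fc s₀ z‖ ≤ K₂ * ‖z‖ ^ (τ - k) := by
    intro k hk z hz
    have hz0 : z ≠ 0 := hz.2
    have hzn : ‖z‖ ≠ 0 := norm_ne_zero_iff.mpr hz0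
    have happ := norm_iteratedFDerivWithin_clm_apply (𝕜 := ℝ)
      (f := fun z => mulL (Pm z)) (g := fun z => (mulL (φ z)) (Pm z)) hmulP hinner₀
      hs₀open.uniqueDiffOn hz
      (by exact_mod_cast hk : (k : WithTop ℕ∞) ≤ ((τ - 1 : ℕ) : WithTop ℕ∞))
    refine happ.trans ?_
    have hWmulP : ∀ i : ℕ, i ≤ τ - 1 → ∀ z ∈ s₀,
        ‖iteratedFDerivWithin ℝ i (fun z => mulL (Pm z)) s₀ z‖
          ≤ bM * (Kp * ‖z‖⁻¹ ^ i) := by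
      intro i hi z hz
      have hcomp := ContinuousLinearMap.iteratedFDerivWithin_comp_left (𝕜 := ℝ)
        (f := Pm) (mulL (n := n)) (hPs₀ z hz) hs₀open.uniqueDiffOn hz
        (i := i) (by exact_mod_cast hi)
      refine (congrArg norm hcomp).trans_le ?_
      refine (ContinuousLinearMap.norm_compContinuousMultilinearMap_le _ _).trans ?_
      exact mul_le_mul_of_nonneg_left (hWP i hi z hz) hbM0
    have hterm : ∀ i ∈ Finset.range (k + 1),
        (k.choose i : ℝ) * ‖iteratedFDerivWithin ℝ i (fun z => mulL (Pm z)) s₀ z‖ *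
          ‖iteratedFDerivWithin ℝ (k - i) (fun z => (mulL (φ z)) (Pm z)) s₀ z‖
        ≤ (k.choose i : ℝ) * ((bM * Kp * K₁) * ‖z‖ ^ (τ - k)) := by
      intro i hi
      have hik : i ≤ k := by
        have := Finset.mem_range.mp hi; omega
      have h1 := hWmulP i (le_trans hik hk) z hz
      have h2 := hWinner (k - i) (by omega) z hz
      calc (k.choose i : ℝ) * ‖iteratedFDerivWithin ℝ i (fun z => mulL (Pm z)) s₀ z‖ *
            ‖iteratedFDerivWithin ℝ (k - i) (fun z => (mulL (φ z)) (Pm z)) s₀ z‖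
          ≤ (k.choose i : ℝ) * (bM * (Kp * ‖z‖⁻¹ ^ i)) * (K₁ * ‖z‖ ^ (τ - (k - i))) := by
            apply mul_le_mul (mul_le_mul_of_nonneg_left h1 (by positivity)) h2
              (norm_nonneg _) (by positivity)
        _ = (k.choose i : ℝ) * ((bM * Kp * K₁) * (‖z‖⁻¹ ^ i * ‖z‖ ^ (τ - (k - i)))) := by
            ring
        _ = (k.choose i : ℝ) * ((bM * Kp * K₁) * ‖z‖ ^ (τ - k)) := by
            rw [pow_split' hzn hik (by omega)]
    refine (Finset.sum_le_sum hterm).trans ?_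
    rw [← Finset.sum_mul]
    have hsum : (∑ i ∈ Finset.range (k + 1), (k.choose i : ℝ)) = 2 ^ k := by
      exact_mod_cast Nat.sum_range_choose k
    rw [hsum, hK₂]
    have h2k : (2:ℝ) ^ k ≤ 2 ^ (τ - 1) := pow_le_pow_right₀ one_le_two hk
    calc (2:ℝ) ^ k * ((bM * Kp * K₁) * ‖z‖ ^ (τ - k))
        ≤ 2 ^ (τ-1) * ((bM * Kp * K₁) * ‖z‖ ^ (τ - k)) :=
          mul_le_mul_of_nonneg_right h2k (by positivity)
      _ = 2 ^ (τ-1) * (bM * Kp * K₁) * ‖z‖ ^ (τ - k) := by ring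
  -- global bounds, in the form needed for the extension lemma
  have hbound : ∀ k : ℕ, k ≤ τ - 1 → ∀ z : Fin n → ℝ, z ≠ 0 → ‖z‖ < δ →
      ‖iteratedFDeriv ℝ k Fc z‖ ≤ K₂ * ‖z‖ ^ ((τ - 1) + 1 - k) := by
    intro k hk z hz0 hzδ'
    have hzs₀ : z ∈ s₀ := ⟨mem_ball_zero_iff.mpr hzδ', hz0⟩
    have := hWFc k hk z hzs₀
    rw [← iteratedFDerivWithin_of_isOpen k hs₀open hzs₀]
    have he : (τ - 1) + 1 - k = τ - k := by omega
    rwa [he]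
  -- apply the extension lemma
  have hGext := extension_contDiffOn (τ - 1) Fc K₂ δ hδ0 (hFcs'.mono hsub) hbound
  -- the extension
  refine ⟨fun z => 1 + (if z = (0 : Fin n → ℝ) then 0 else Fc z), ?_, ?_, by simp⟩
  · intro z hz
    by_cases hzb : ‖z‖ < δ
    · exact ((contDiffOn_const.add hGext).contDiffAt
        (Metric.isOpen_ball.mem_nhds (mem_ball_zero_iff.mpr hzb))).contDiffWithinAt
    · have hz0 : z ≠ 0 := by
        intro h0
        rw [h0, norm_zero] at hzb
        exact hzb hδ0
      have hzs' : z ∈ s' := ⟨hz0, hz⟩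
      have h2 : ContDiffAt ℝ (τ - 1 : ℕ) (fun z => 1 + Fc z) z :=
        (contDiffOn_const.add hFcs').contDiffAt (hs'open.mem_nhds hzs')
      have heq : (fun z : Fin n → ℝ => 1 + (if z = 0 then 0 else Fc z))
          =ᶠ[nhds z] (fun z => 1 + Fc z) := by
        filter_upwards [isOpen_compl_singleton.mem_nhds hz0] with x hx
        have hx' : x ≠ 0 := hx
        rw [if_neg hx']
      exact (h2.congr_of_eventuallyEq heq).contDiffWithinAt
  · intro z hz0 hze
    show 1 + (if z = (0 : Fin n → ℝ) then 0 else Fc z) = invertedMetric h z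
    rw [if_neg hz0, invertedMetric_eq h hz0]
    rfl
end
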